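/- arXiv:1705.00942 — 6 statements merged into one kernel-verified Lean document; each statement's English description precedes it below -/
import Mathlib

section
/- The class of affine signatures is closed under identifying two variables: if f(x₁,…,x_n) is affine, then so is the arity-(n−1) function obtained by setting x_j = x_ℓ. -/
open Matrix

/-- The extended vector (x₁,…,x_k,1) over 𝔽₂. -/
def ext {k : ℕ} (x : Fin k → ZMod 2) : Fin (k + 1) → ZMod 2 := Fin.snoc x 1

/-- A function f : {0,1}^k → ℂ is affine if it has the form
λ · χ_{Ax=0} · i^{Σⱼ⟨αⱼ,x⟩} on the extended vector x = (x₁,…,x_k,1). -/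
def IsAffine (k : ℕ) (f : (Fin k → ZMod 2) → ℂ) : Prop :=
  ∃ (lam : ℂ) (m t : ℕ) (A : Matrix (Fin m) (Fin (k + 1)) (ZMod 2))
    (α : Fin t → Fin (k + 1) → ZMod 2),
    ∀ x, f x = lam * (if A.mulVec (ext x) = 0 then 1 else 0) *
      Complex.I ^ ((∑ j, (∑ i, α j i * ext x i).val) % 4)

/-- Assemble the row index (x₁,…,x_n) and column index (x₂ₙ,…,x_{n+1})
into the full argument (x₁,…,x₂ₙ). -/
def assemble {n : ℕ} (x y : Fin n → ZMod 2) : Fin (2 * n) → ZMod 2 :=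
  fun i => if h : (i : ℕ) < n then x ⟨i, h⟩
    else y ⟨2 * n - 1 - i, by have := i.isLt; omega⟩

/-- The signature matrix of an arity-2n signature. -/
def sigMatrix (n : ℕ) (f : (Fin (2 * n) → ZMod 2) → ℂ) :
    Matrix (Fin n → ZMod 2) (Fin n → ZMod 2) ℂ :=
  Matrix.of fun x y => f (assemble x y)


noncomputable def subG {n : ℕ} (j : Fin (n + 1)) (l : Fin n) : Fin (n + 2) → Fin (n + 1) :=
  fun i =>
    if hi : i = Fin.last (n + 1) then Fin.last n
    else if hij : i.castPred hi = j then l.castSucc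
    else (Fin.exists_succAbove_eq hij).choose.castSucc

lemma ext_insertNth {n : ℕ} (j : Fin (n + 1)) (l : Fin n) (x : Fin n → ZMod 2)
    (i : Fin (n + 2)) :
    _root_.ext (j.insertNth (x l) x) i = _root_.ext x (subG j l i) := by
  unfold _root_.ext subG
  refine Fin.lastCases ?_ ?_ i
  · simp
  · intro i'
    rw [dif_neg (Fin.castSucc_lt_last i').ne]
    simp only [Fin.castPred_castSucc, Fin.snoc_castSucc]
    by_cases h : i' = j
    · subst h; simp
    · erw [dif_neg h]
      have hs := (Fin.exists_succAbove_eq h).choose_spec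
      have h2 : (j.insertNth (x l) x : Fin (n + 1) → ZMod 2) (j.succAbove (Fin.exists_succAbove_eq h).choose)
          = x (Fin.exists_succAbove_eq h).choose := by simp
      rw [hs] at h2
      rw [Fin.snoc_castSucc, h2]

noncomputable def subM (n : ℕ) (j : Fin (n + 1)) (l : Fin n) :
    Matrix (Fin (n + 2)) (Fin (n + 1)) (ZMod 2) :=
  Matrix.of fun i k => if subG j l i = k then 1 else 0

lemma subM_mulVec {n : ℕ} (j : Fin (n + 1)) (l : Fin n) (x : Fin n → ZMod 2) :
    (subM n j l).mulVec (_root_.ext x) = _root_.ext (j.insertNth (x l) x) := by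
  funext i
  rw [ext_insertNth j l x i]
  simp [subM, Matrix.mulVec, dotProduct, ite_mul]

theorem affine_closed_identify (n : ℕ) (f : (Fin (n + 1) → ZMod 2) → ℂ)
    (hf : IsAffine (n + 1) f) (j : Fin (n + 1)) (l : Fin n) :
    IsAffine n (fun x => f (j.insertNth (x l) x)) := by
  obtain ⟨lam, m, t, A, α, hA⟩ := hf
  show IsAffine _ _
  refine ⟨lam, m, t, A * subM n j l, fun j' => Matrix.vecMul (α j') (subM n j l), fun x => ?_⟩
  show f (j.insertNth (x l) x) = _
  rw [hA]
  have hv : _root_.ext (j.insertNth (x l) x) = (subM n j l).mulVec (_root_.ext x) :=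
    (subM_mulVec j l x).symm
  rw [hv, ← Matrix.mulVec_mulVec]
  have hsum : ∀ j' : Fin t,
      (∑ i, α j' i * ((subM n j l).mulVec (_root_.ext x)) i)
        = ∑ i, Matrix.vecMul (α j') (subM n j l) i * _root_.ext x i :=
    fun j' => Matrix.dotProduct_mulVec (α j') (subM n j l) (_root_.ext x)
  simp only [hsum]
end

section
/- Every affine signature can be written, up to a nonzero complex scalar, as χ_{Ax=0}·i^{Q(x)}, where Q is a homogeneous quadratic polynomial over ℤ in which every cross term x_j x_ℓ (j ≠ ℓ) has an even coefficient, and the exponent is evaluated mod 4; conversely, every such function is affine. -/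
open Matrix

/-- The extended vector over ℤ, with 0-1 entries. -/
def intExt {k : ℕ} (x : Fin k → ZMod 2) : Fin (k + 1) → ℤ :=
  fun i => ((ext x i).val : ℤ)

private theorem exp_bridge (N : ℕ) (q : ℤ) (h : ((N : ℤ) : ZMod 4) = (q : ZMod 4)) :
    N % 4 = (q % 4).toNat := by
  have := (ZMod.intCast_eq_intCast_iff' _ _ _).mp h
  unfold Int.ModEq at this
  omega

private theorem cast_toNat_mod4 (a : ℤ) : (((a % 4).toNat : ℕ) : ZMod 4) = (a : ZMod 4) := by
  have h0 : (0:ℤ) ≤ a % 4 := Int.emod_nonneg _ (by norm_num)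
  have : (((a % 4).toNat : ℤ) : ZMod 4) = ((a % 4 : ℤ) : ZMod 4) := by
    rw [Int.toNat_of_nonneg h0]
  rw [← Int.cast_natCast, this]
  have : a % 4 ≡ a [ZMOD 4] := Int.emod_emod_of_dvd a dvd_rfl
  exact (ZMod.intCast_eq_intCast_iff' _ _ _).mpr this

private theorem val_add_cast4 (a b : ZMod 2) :
    (((a + b).val : ℕ) : ZMod 4) = (a.val : ZMod 4) + (b.val : ZMod 4)
      - 2 * ((a.val : ZMod 4) * (b.val : ZMod 4)) := by
  fin_cases a <;> fin_cases b <;> decide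

private theorem sq_cast4 (s : ℤ) (u : ZMod 2) (h : (s : ZMod 2) = u) :
    ((u.val : ℕ) : ZMod 4) = ((s ^ 2 : ℤ) : ZMod 4) := by
  have h2 : s ≡ (u.val : ℤ) [ZMOD 2] := by
    apply (ZMod.intCast_eq_intCast_iff' _ _ _).mp
    rw [h]; push_cast; simp [ZMod.natCast_val, ZMod.cast_id]
  obtain ⟨k, hk⟩ := h2.dvd
  have he : u.val = 0 ∨ u.val = 1 := by have := u.val_lt; omega
  have hs : s = (u.val : ℤ) - 2 * k := by omega
  have : s ^ 2 ≡ (u.val : ℤ) [ZMOD 4] := by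
    rcases he with he | he <;> rw [hs, he] <;> push_cast <;>
      · unfold Int.ModEq; ring_nf; omega
  rw [← Int.cast_natCast]
  exact (ZMod.intCast_eq_intCast_iff' _ _ _).mpr this.symm

private theorem key_identity {κ : Type*} [Fintype κ] [LinearOrder κ] {R : Type*} [CommRing R]
    (T : κ → κ → R) (hT : ∀ j ℓ, T j ℓ = T ℓ j) (w : κ → R) (hw : ∀ j, w j * w j = w j) :
    ∑ j, ∑ ℓ, T j ℓ * w j * w ℓ
      = ∑ j, (∑ ℓ, T j ℓ) * w j
        - ∑ p ∈ Finset.univ.filter (fun p : κ × κ => p.1 < p.2),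
            T p.1 p.2 * (w p.1 + w p.2 - 2 * (w p.1 * w p.2)) := by
  have h1 : ∑ j, ∑ ℓ, T j ℓ * w j * w ℓ = ∑ p : κ × κ, T p.1 p.2 * w p.1 * w p.2 := by
    rw [← Finset.univ_product_univ, Finset.sum_product]
  have h2 : ∑ j, (∑ ℓ, T j ℓ) * w j = ∑ p : κ × κ, T p.1 p.2 * w p.1 := by
    rw [← Finset.univ_product_univ, Finset.sum_product]
    simp [Finset.sum_mul]
  have h3 : ∑ p : κ × κ, (T p.1 p.2 * w p.1 - T p.1 p.2 * w p.1 * w p.2)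
      = ∑ p ∈ Finset.univ.filter (fun p : κ × κ => p.1 < p.2),
          T p.1 p.2 * (w p.1 + w p.2 - 2 * (w p.1 * w p.2)) := by
    rw [← Finset.sum_filter_add_sum_filter_not Finset.univ (fun p : κ × κ => p.1 < p.2)]
    have hswap : ∑ p ∈ Finset.univ.filter (fun p : κ × κ => ¬ p.1 < p.2),
        (T p.1 p.2 * w p.1 - T p.1 p.2 * w p.1 * w p.2)
        = ∑ p ∈ Finset.univ.filter (fun p : κ × κ => p.1 ≤ p.2),
            (T p.1 p.2 * w p.2 - T p.1 p.2 * w p.1 * w p.2) := by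
      refine Finset.sum_nbij' (fun p => Prod.swap p) (fun p => Prod.swap p) ?_ ?_ ?_ ?_ ?_
      · intro p hp; simp at hp ⊢; exact hp
      · intro p hp; simp at hp ⊢; exact hp
      · intro p _; simp
      · intro p _; simp
      · intro p _; simp only [Prod.fst_swap, Prod.snd_swap, hT p.2 p.1]; ring
    rw [hswap]
    have e1 : (Finset.univ.filter (fun p : κ × κ => p.1 ≤ p.2)).filter (fun p => p.1 < p.2)
        = Finset.univ.filter (fun p : κ × κ => p.1 < p.2) := by
      ext p
      simp only [Finset.mem_filter, Finset.mem_univ, true_and]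
      exact ⟨fun h => h.2, fun h => ⟨h.le, h⟩⟩
    have e2 : (Finset.univ.filter (fun p : κ × κ => p.1 ≤ p.2)).filter (fun p => ¬ p.1 < p.2)
        = Finset.univ.filter (fun p : κ × κ => p.1 = p.2) := by
      ext p
      simp only [Finset.mem_filter, Finset.mem_univ, true_and, not_lt]
      exact ⟨fun h => le_antisymm h.1 h.2, fun h => ⟨h.le, h.ge⟩⟩
    rw [← Finset.sum_filter_add_sum_filter_not
        (Finset.univ.filter (fun p : κ × κ => p.1 ≤ p.2)) (fun p => p.1 < p.2), e1, e2]
    have e3 : ∑ p ∈ Finset.univ.filter (fun p : κ × κ => p.1 = p.2),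
        (T p.1 p.2 * w p.2 - T p.1 p.2 * w p.1 * w p.2) = 0 := by
      refine Finset.sum_eq_zero fun p hp => ?_
      simp only [Finset.mem_filter, Finset.mem_univ, true_and] at hp
      rw [hp, mul_assoc, hw]; ring
    rw [e3, add_zero, ← Finset.sum_add_distrib]
    exact Finset.sum_congr rfl fun p _ => by ring
  rw [h1, h2, ← h3, Finset.sum_sub_distrib]
  ring

/-- An affine signature is, up to a scalar, χ_{Ax=0}·i^{Q(x)} where Q is a
homogeneous quadratic integer polynomial all of whose cross terms have even
coefficients (equivalently Q(x) = xᵀSx for a symmetric integer matrix S),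
the exponent evaluated mod 4; and conversely. -/
theorem affine_iff_quadratic (n : ℕ) (f : (Fin n → ZMod 2) → ℂ) :
    IsAffine n f ↔
      ∃ (c : ℂ) (m : ℕ) (A : Matrix (Fin m) (Fin (n + 1)) (ZMod 2))
        (S : Matrix (Fin (n + 1)) (Fin (n + 1)) ℤ), S.IsSymm ∧
        ∀ x, f x = c * (if A.mulVec (ext x) = 0 then 1 else 0) *
          Complex.I ^ ((intExt x ⬝ᵥ S.mulVec (intExt x)) % 4).toNat := by
  constructor
  · rintro ⟨lam, m, t, A, α, hf⟩
    refine ⟨lam, m, A, Matrix.of fun i i' => ∑ j, ((α j i).val : ℤ) * ((α j i').val : ℤ),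
      ?_, fun x => ?_⟩
    · ext i i'
      simp only [Matrix.transpose_apply, Matrix.of_apply]
      exact Finset.sum_congr rfl fun _ _ => mul_comm _ _
    · rw [hf x]
      congr 2
      apply exp_bridge
      have hq : intExt x ⬝ᵥ (Matrix.of fun i i' =>
            ∑ j, ((α j i).val : ℤ) * ((α j i').val : ℤ)).mulVec (intExt x)
          = ∑ j, (∑ i, ((α j i).val : ℤ) * intExt x i) ^ 2 := by
        simp only [dotProduct, Matrix.mulVec, Matrix.of_apply, Finset.mul_sum,
          Finset.sum_mul]
        rw [Finset.sum_comm]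
        refine Finset.sum_congr rfl (fun y _ => Finset.sum_comm) |>.trans ?_
        rw [Finset.sum_comm]
        refine Finset.sum_congr rfl fun j _ => ?_
        rw [sq, Finset.sum_mul]
        refine Finset.sum_congr rfl fun y _ => ?_
        rw [Finset.mul_sum]
        exact Finset.sum_congr rfl fun i _ => by ring
      rw [hq]
      push_cast
      refine Finset.sum_congr rfl fun j _ => ?_
      have hcast : ((∑ i, ((α j i).val : ℤ) * intExt x i : ℤ) : ZMod 2)
          = ∑ i, α j i * ext x i := by
        push_cast
        refine Finset.sum_congr rfl fun i _ => ?_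
        simp [intExt, ZMod.natCast_val, ZMod.cast_id]
      rw [sq_cast4 _ _ hcast]
      push_cast
      ring
  · rintro ⟨c, m, A, S, hS, hf⟩
    classical
    have hsymm : ∀ j ℓ, S j ℓ = S ℓ j := fun j ℓ => by
      conv_lhs => rw [← hS]
      rfl
    set M : Fin (n + 1) × Fin (n + 1) → ℕ := fun p =>
      if p.1 = p.2 then ((∑ ℓ, S p.1 ℓ) % 4).toNat
      else if p.1 < p.2 then ((-S p.1 p.2) % 4).toNat else 0 with hM
    set β : Fin (n + 1) × Fin (n + 1) → (Fin (n + 1) → ZMod 2) := fun p =>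
      if p.1 = p.2 then Pi.single p.1 1 else Pi.single p.1 1 + Pi.single p.2 1 with hβ
    set I := (p : Fin (n + 1) × Fin (n + 1)) × Fin (M p) with hI
    set e : Fin (Fintype.card I) ≃ I := (Fintype.equivFin I).symm with he
    refine ⟨c, m, Fintype.card I, A, fun j => β (e j).1, fun x => ?_⟩
    rw [hf x]
    congr 2
    symm
    apply exp_bridge
    set w : Fin (n + 1) → ZMod 4 := fun i => ((ext x i).val : ZMod 4) with hw
    have hww : ∀ i, w i * w i = w i := by
      intro i
      have : (ext x i).val = 0 ∨ (ext x i).val = 1 := by have := (ext x i).val_lt; omega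
      rcases this with h | h <;> simp only [hw] <;> rw [h] <;> decide
    have hN : ((∑ j : Fin (Fintype.card I), (∑ i, β (e j).1 i * ext x i).val : ℕ) : ZMod 4)
        = ∑ p : Fin (n + 1) × Fin (n + 1),
            (M p : ZMod 4) * (((∑ i, β p i * ext x i).val : ℕ) : ZMod 4) := by
      push_cast
      rw [Equiv.sum_comp e (fun i : I => (((∑ i', β i.1 i' * ext x i').val : ℕ) : ZMod 4))]
      rw [← Finset.univ_sigma_univ, Finset.sum_sigma]
      simp [Finset.sum_const, mul_comm]
    have hpt : ∀ p : Fin (n + 1) × Fin (n + 1),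
        (M p : ZMod 4) * (((∑ i, β p i * ext x i).val : ℕ) : ZMod 4)
        = (if p.1 = p.2 then ((∑ ℓ, S p.1 ℓ : ℤ) : ZMod 4) * w p.1 else 0)
          + (if p.1 < p.2 then ((S p.1 p.2 : ℤ) : ZMod 4)
              * (2 * (w p.1 * w p.2) - w p.1 - w p.2) else 0) := by
      intro p
      by_cases h1 : p.1 = p.2
      · have hβp : β p = Pi.single p.1 1 := by simp [hβ, h1]
        have hinner : (∑ i, β p i * ext x i) = ext x p.1 := by
          rw [hβp]
          simp [Pi.single_apply, Finset.sum_ite_eq']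
        rw [hinner]
        simp only [hM, h1, if_true, lt_irrefl, if_false, eq_self_iff_true]
        rw [cast_toNat_mod4]
        simp [hw, h1, lt_irrefl]
      · by_cases h2 : p.1 < p.2
        · have hβp : β p = Pi.single p.1 1 + Pi.single p.2 1 := by simp [hβ, h1]
          have hinner : (∑ i, β p i * ext x i) = ext x p.1 + ext x p.2 := by
            rw [hβp]
            simp [Pi.single_apply, add_mul, Finset.sum_add_distrib, Finset.sum_ite_eq']
          rw [hinner]
          simp only [hM, if_neg h1, if_pos h2]
          rw [cast_toNat_mod4, val_add_cast4]
          simp only [if_neg h1, if_pos h2, hw]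
          push_cast
          ring
        · simp [hM, if_neg h1, if_neg h2]
    have hq : ((intExt x ⬝ᵥ S.mulVec (intExt x) : ℤ) : ZMod 4)
        = ∑ j, ∑ ℓ, ((S j ℓ : ℤ) : ZMod 4) * w j * w ℓ := by
      simp only [dotProduct, Matrix.mulVec, intExt]
      push_cast
      refine Finset.sum_congr rfl fun j _ => ?_
      rw [Finset.mul_sum]
      refine Finset.sum_congr rfl fun ℓ _ => ?_
      ring
    have hkey := key_identity (fun j ℓ => ((S j ℓ : ℤ) : ZMod 4))
      (fun j ℓ => congrArg (fun z : ℤ => (z : ZMod 4)) (hsymm j ℓ)) w hww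
    rw [Int.cast_natCast]
    beta_reduce
    beta_reduce at hkey
    rw [hN, hq, hkey]
    rw [Finset.sum_congr rfl fun p _ => hpt p, Finset.sum_add_distrib]
    have hD : ∑ p : Fin (n + 1) × Fin (n + 1),
        (if p.1 = p.2 then ((∑ ℓ, S p.1 ℓ : ℤ) : ZMod 4) * w p.1 else 0)
        = ∑ j, (∑ ℓ, ((S j ℓ : ℤ) : ZMod 4)) * w j := by
      rw [← Finset.univ_product_univ, Finset.sum_product]
      refine Finset.sum_congr rfl fun j _ => ?_
      simp only [Finset.sum_ite_eq, Finset.sum_ite_eq', Finset.mem_univ, if_true]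
      push_cast
      ring
    have hE : ∑ p : Fin (n + 1) × Fin (n + 1),
        (if p.1 < p.2 then ((S p.1 p.2 : ℤ) : ZMod 4)
            * (2 * (w p.1 * w p.2) - w p.1 - w p.2) else 0)
        = - ∑ p ∈ Finset.univ.filter (fun p : Fin (n + 1) × Fin (n + 1) => p.1 < p.2),
            ((S p.1 p.2 : ℤ) : ZMod 4) * (w p.1 + w p.2 - 2 * (w p.1 * w p.2)) := by
      rw [← Finset.sum_filter, ← Finset.sum_neg_distrib]
      refine Finset.sum_congr rfl fun p _ => by ring
    rw [hD, hE]
    ring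
end

section
/- Let f be an affine signature of arity 2n with nonsingular signature matrix M_f, with dimension-r affine support and written (after substitution) as f = μ·χ·i^{xᵀC₁x + y'ᵀC₂y' + 2y'ᵀC₃x} with |μ| = 2^{−r/2}. Then M_f is unitary. -/
open Matrix

/-- A 0-1 bit vector viewed over ℤ. -/
def iv {k : ℕ} (v : Fin k → ZMod 2) : Fin k → ℤ := fun i => ((v i).val : ℤ)

lemma I_zpow_four : Complex.I ^ (4:ℤ) = 1 := by
  rw [show (4:ℤ) = ((4:ℕ):ℤ) by norm_num, zpow_natCast]
  simp [pow_succ, Complex.I_mul_I]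

lemma I_zpow_mod (m : ℤ) : Complex.I ^ ((m % 4).toNat) = Complex.I ^ m := by
  have h1 : Complex.I ^ ((m % 4).toNat) = Complex.I ^ (((m % 4).toNat : ℤ)) :=
    (zpow_natCast _ _).symm
  rw [h1, Int.toNat_of_nonneg (Int.emod_nonneg m (by norm_num))]
  conv_rhs => rw [← Int.mul_ediv_add_emod m 4]
  rw [zpow_add₀ Complex.I_ne_zero, _root_.zpow_mul, I_zpow_four, _root_.one_zpow, one_mul]

lemma conj_I_zpow (m : ℤ) : (starRingEnd ℂ) (Complex.I ^ m) = Complex.I ^ (-m) := by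
  rw [map_zpow₀, Complex.conj_I, ← Complex.inv_I, _root_.inv_zpow, _root_.zpow_neg]

lemma zpow_sum' {α : Type*} (s : Finset α) (f : α → ℤ) :
    (-1 : ℂ) ^ (∑ i ∈ s, f i) = ∏ i ∈ s, (-1 : ℂ) ^ f i := by
  induction s using Finset.cons_induction with
  | empty => simp
  | cons a s ha ih => rw [Finset.sum_cons, Finset.prod_cons, zpow_add₀ (by norm_num), ih]

lemma I_zpow_two_mul (t : ℤ) : Complex.I ^ (2 * t) = (-1 : ℂ) ^ t := by
  rw [_root_.zpow_mul, show (2:ℤ) = ((2:ℕ):ℤ) from rfl, zpow_natCast, Complex.I_sq]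

lemma char_sum (k : ℕ) (w : Fin k → ℤ) :
    ∑ y : Fin k → ZMod 2, (-1 : ℂ) ^ (iv y ⬝ᵥ w) =
      if ∀ j, 2 ∣ w j then (2 : ℂ) ^ k else 0 := by
  have step : ∀ y : Fin k → ZMod 2, (-1 : ℂ) ^ (iv y ⬝ᵥ w) =
      ∏ j : Fin k, (-1 : ℂ) ^ (((y j).val : ℤ) * w j) := fun y =>
    zpow_sum' Finset.univ (fun j => ((y j).val : ℤ) * w j)
  simp only [step]
  have key := Finset.prod_univ_sum (κ := fun _ : Fin k => ZMod 2)
    (t := fun _ : Fin k => (Finset.univ : Finset (ZMod 2)))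
    (f := fun j c => (-1:ℂ) ^ ((c.val : ℤ) * w j))
  rw [Fintype.piFinset_univ] at key
  rw [← key]
  have inner : ∀ j : Fin k, (∑ c : ZMod 2, (-1 : ℂ) ^ ((c.val : ℤ) * w j)) =
      if 2 ∣ w j then 2 else 0 := by
    intro j
    have h0v : (((0 : ZMod 2)).val : ℤ) = 0 := rfl
    have h1v : (((1 : ZMod 2)).val : ℤ) = 1 := rfl
    rw [show (Finset.univ : Finset (ZMod 2)) = {0, 1} from rfl,
      Finset.sum_insert (by decide), Finset.sum_singleton, h0v, h1v, zero_mul, one_mul,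
      zpow_zero]
    by_cases h : 2 ∣ w j
    · have he : Even (w j) := by obtain ⟨c, hc⟩ := h; exact ⟨c, by omega⟩
      rw [if_pos h, he.neg_one_zpow]; norm_num
    · have ho : Odd (w j) := Int.not_even_iff_odd.mp (fun he => h he.two_dvd)
      rw [if_neg h, ho.neg_one_zpow]; norm_num
  simp only [inner]
  by_cases h : ∀ j, 2 ∣ w j
  · simp [h, Finset.prod_const]
  · push_neg at h
    obtain ⟨j, hj⟩ := h
    rw [if_neg (by push_neg; exact ⟨j, hj⟩)]
    exact Finset.prod_eq_zero (Finset.mem_univ j) (by simp [hj])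

lemma no_prop_rows {α β : Type*} [Fintype α] [Fintype β] [DecidableEq α]
    (M : Matrix α β ℂ) (Minv : Matrix β α ℂ) (h : M * Minv = 1)
    (x x' : α) (hxx : x ≠ x') (c : ℂ)
    (hrow : ∀ y, M x' y = c * M x y) : False := by
  have hx'x : x' ≠ x := fun h' => hxx h'.symm
  set v : α → ℂ := fun z => (Pi.single x' 1 : α → ℂ) z - c * (Pi.single x 1 : α → ℂ) z with hv
  have hvM : Matrix.vecMul v M = 0 := by
    ext y
    have h0 : Matrix.vecMul v M y = ∑ z, v z * M z y := rfl
    have expand : ∀ z, v z * M z y =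
        (if z = x' then M x' y else 0) - c * (if z = x then M x y else 0) := by
      intro z
      simp only [hv, Pi.single_apply]
      by_cases h1 : z = x' <;> by_cases h2 : z = x <;> simp [h1, h2, hx'x, hxx] <;> ring
    rw [h0]
    simp only [expand]
    rw [Finset.sum_sub_distrib, Finset.sum_ite_eq' Finset.univ x' (fun _ => M x' y),
      ← Finset.mul_sum, Finset.sum_ite_eq' Finset.univ x (fun _ => M x y)]
    simp [hrow y]
  have hv0 : v = 0 := by
    have h2 : Matrix.vecMul (Matrix.vecMul v M) Minv = Matrix.vecMul v (M * Minv) :=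
      Matrix.vecMul_vecMul v M Minv
    rw [hvM, h, Matrix.vecMul_one, Matrix.zero_vecMul] at h2
    exact h2.symm
  have hv1 : v x' = 1 := by
    simp [hv, Pi.single_apply, hx'x]
  rw [hv0] at hv1
  simp at hv1


/-- Unitarity lemma: a nonsingular affine signature matrix, written in the
parametrized form with support y'' = Ax + By' + b and entries
μ·i^{xᵀC₁x + y'ᵀC₂y' + 2y'ᵀC₃x} with |μ| = 2^{-r/2}, is unitary. -/
theorem affine_nonsingular_unitary (n r : ℕ) (hr : r ≤ n)
    (A : Matrix (Fin (n - r)) (Fin n) (ZMod 2))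
    (B : Matrix (Fin (n - r)) (Fin r) (ZMod 2))
    (b : Fin (n - r) → ZMod 2)
    (C₁ : Matrix (Fin n) (Fin n) ℤ) (hC₁ : C₁.IsSymm)
    (C₂ : Matrix (Fin r) (Fin r) ℤ) (hC₂ : C₂.IsSymm)
    (C₃ : Matrix (Fin r) (Fin n) ℤ)
    (μ : ℂ) (hμ : ‖μ‖ = (2 : ℝ) ^ (-(r : ℝ) / 2))
    (M : Matrix (Fin n → ZMod 2) ((Fin r → ZMod 2) × (Fin (n - r) → ZMod 2)) ℂ)
    (hM : ∀ x y, M x y =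
      μ * (if y.2 = A.mulVec x + B.mulVec y.1 + b then 1 else 0) *
        Complex.I ^ (((iv x ⬝ᵥ C₁.mulVec (iv x) + iv y.1 ⬝ᵥ C₂.mulVec (iv y.1)
          + 2 * (iv y.1 ⬝ᵥ C₃.mulVec (iv x))) % 4).toNat))
    (hns : ∃ Minv : Matrix ((Fin r → ZMod 2) × (Fin (n - r) → ZMod 2)) (Fin n → ZMod 2) ℂ,
      M * Minv = 1 ∧ Minv * M = 1) :
    M * Mᴴ = 1 ∧ Mᴴ * M = 1 := by
  obtain ⟨Minv, hMl, hMr⟩ := hns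
  set q : (Fin n → ZMod 2) → (Fin r → ZMod 2) → ℤ := fun x y₁ =>
    iv x ⬝ᵥ C₁.mulVec (iv x) + iv y₁ ⬝ᵥ C₂.mulVec (iv y₁)
      + 2 * (iv y₁ ⬝ᵥ C₃.mulVec (iv x)) with hq
  have hM2 : ∀ x y₁ y₂, M x (y₁, y₂) =
      μ * (if y₂ = A.mulVec x + B.mulVec y₁ + b then 1 else 0) * Complex.I ^ (q x y₁) := by
    intro x y₁ y₂
    rw [hM x (y₁, y₂), I_zpow_mod]
  have hscal : μ * (starRingEnd ℂ) μ * (2:ℂ)^r = 1 := by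
    have h1 : μ * (starRingEnd ℂ) μ = ((‖μ‖ ^ 2 : ℝ) : ℂ) := by
      rw [Complex.mul_conj, Complex.sq_norm]
    rw [h1, hμ]
    have h2 : ((2:ℝ) ^ (-(r:ℝ)/2)) ^ 2 = (2:ℝ) ^ (-(r:ℝ)) := by
      rw [← Real.rpow_natCast ((2:ℝ) ^ (-(r:ℝ)/2)) 2, ← Real.rpow_mul (by norm_num)]
      norm_num
    rw [h2]
    have h3 : ((2:ℂ)^r) = (((2:ℝ)^r : ℝ) : ℂ) := by push_cast; ring
    rw [h3, ← Complex.ofReal_mul,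
      show (2:ℝ)^r = (2:ℝ)^((r:ℕ):ℝ) from (Real.rpow_natCast 2 r).symm,
      ← Real.rpow_add (by norm_num)]
    norm_num
  have key : M * Mᴴ = 1 := by
    ext x x'
    rw [Matrix.mul_apply, Matrix.one_apply]
    simp only [Matrix.conjTranspose_apply]
    rw [Fintype.sum_prod_type]
    set w : Fin r → ℤ := fun j => C₃.mulVec (iv x) j - C₃.mulVec (iv x') j with hw
    set c₀ : ℤ := iv x ⬝ᵥ C₁.mulVec (iv x) - iv x' ⬝ᵥ C₁.mulVec (iv x') with hc₀
    have qdiff : ∀ y₁ : Fin r → ZMod 2, q x y₁ - q x' y₁ = c₀ + 2 * (iv y₁ ⬝ᵥ w) := by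
      intro y₁
      have hdw : iv y₁ ⬝ᵥ w
          = iv y₁ ⬝ᵥ C₃.mulVec (iv x) - iv y₁ ⬝ᵥ C₃.mulVec (iv x') := by
        simp [hw, dotProduct, Finset.sum_sub_distrib, mul_sub]
      rw [hdw]
      simp only [hq, hc₀]
      ring
    have Izz : ∀ y₁ : Fin r → ZMod 2,
        Complex.I ^ (q x y₁) * Complex.I ^ (-(q x' y₁))
          = Complex.I ^ c₀ * (-1:ℂ) ^ (iv y₁ ⬝ᵥ w) := by
      intro y₁
      rw [← zpow_add₀ Complex.I_ne_zero, ← sub_eq_add_neg, qdiff y₁,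
        zpow_add₀ Complex.I_ne_zero, I_zpow_two_mul]
    have inner : ∀ y₁ : Fin r → ZMod 2,
        (∑ y₂ : Fin (n-r) → ZMod 2, M x (y₁, y₂) * star (M x' (y₁, y₂))) =
          (if A.mulVec x = A.mulVec x' then 1 else 0) * (μ * (starRingEnd ℂ) μ) *
            Complex.I ^ c₀ * (-1 : ℂ) ^ (iv y₁ ⬝ᵥ w) := by
      intro y₁
      have term : ∀ y₂, M x (y₁, y₂) * star (M x' (y₁, y₂)) =
          (if y₂ = A.mulVec x + B.mulVec y₁ + b then
            (if y₂ = A.mulVec x' + B.mulVec y₁ + b then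
              ((μ * (starRingEnd ℂ) μ) * Complex.I ^ c₀ * (-1:ℂ) ^ (iv y₁ ⬝ᵥ w))
            else 0) else 0) := by
        intro y₂
        rw [hM2 x y₁ y₂, hM2 x' y₁ y₂, Complex.star_def, _root_.map_mul, _root_.map_mul, conj_I_zpow,
          show (starRingEnd ℂ) (if y₂ = A.mulVec x' + B.mulVec y₁ + b then (1:ℂ) else 0)
            = (if y₂ = A.mulVec x' + B.mulVec y₁ + b then (1:ℂ) else 0) by split <;> simp]
        by_cases h1 : y₂ = A.mulVec x + B.mulVec y₁ + b
        · by_cases h2 : y₂ = A.mulVec x' + B.mulVec y₁ + b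
          · rw [if_pos h1, if_pos h2, if_pos h1, if_pos h2, mul_one, mul_one]
            calc μ * Complex.I ^ (q x y₁) * ((starRingEnd ℂ) μ * Complex.I ^ (-(q x' y₁)))
                = μ * (starRingEnd ℂ) μ * (Complex.I ^ (q x y₁) * Complex.I ^ (-(q x' y₁))) := by
                  ring
              _ = μ * (starRingEnd ℂ) μ * (Complex.I ^ c₀ * (-1:ℂ) ^ (iv y₁ ⬝ᵥ w)) := by
                  rw [Izz y₁]
              _ = μ * (starRingEnd ℂ) μ * Complex.I ^ c₀ * (-1:ℂ) ^ (iv y₁ ⬝ᵥ w) := by ring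
          · have hA' : ¬ (A.mulVec x = A.mulVec x') := fun hA => h2 (by rw [h1, hA])
            simp [h1, h2, hA']
        · simp [h1]
      simp only [term]
      rw [Finset.sum_ite_eq' Finset.univ (A.mulVec x + B.mulVec y₁ + b)]
      simp only [Finset.mem_univ, if_true]
      by_cases hA : A.mulVec x = A.mulVec x'
      · rw [if_pos (by rw [hA]), if_pos hA]
        ring
      · rw [if_neg (fun h => hA (by simpa using h)), if_neg hA]
        ring
    simp only [inner]
    rw [← Finset.mul_sum, char_sum]
    by_cases hx : x = x'
    · subst hx
      rw [if_pos rfl, if_pos rfl, if_pos (fun j => by simp [hw])]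
      have hc0 : c₀ = 0 := by simp [hc₀]
      rw [hc0, zpow_zero]
      simpa using hscal
    · rw [if_neg hx]
      by_cases hA : A.mulVec x = A.mulVec x'
      · by_cases hdvd : ∀ j, 2 ∣ w j
        · exfalso
          apply no_prop_rows M Minv hMl x x' hx (Complex.I ^ (-c₀))
          rintro ⟨y₁, y₂⟩
          rw [hM2, hM2]
          simp only [← hA]
          have ht : Even (iv y₁ ⬝ᵥ w) := by
            have hd : (2:ℤ) ∣ iv y₁ ⬝ᵥ w :=
              Finset.dvd_sum (fun j _ => Dvd.dvd.mul_left (hdvd j) _)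
            obtain ⟨c, hc⟩ := hd
            exact ⟨c, by omega⟩
          have h2t : Complex.I ^ ((-2) * (iv y₁ ⬝ᵥ w)) = 1 := by
            rw [show (-2) * (iv y₁ ⬝ᵥ w) = 2 * (-(iv y₁ ⬝ᵥ w)) by ring, I_zpow_two_mul]
            exact (ht.neg).neg_one_zpow
          have hq' : Complex.I ^ (q x' y₁) = Complex.I ^ (-c₀) * Complex.I ^ (q x y₁) := by
            have e1 : q x' y₁ = (-c₀) + q x y₁ + (-2) * (iv y₁ ⬝ᵥ w) := by
              have := qdiff y₁
              linarith
            rw [e1, zpow_add₀ Complex.I_ne_zero, zpow_add₀ Complex.I_ne_zero, h2t, mul_one]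
          rw [hq']
          ring
        · rw [if_neg hdvd, mul_zero]
      · rw [if_neg hA]
        simp
  refine ⟨key, ?_⟩
  have hMH : Mᴴ = Minv := by
    have h := congrArg (fun X => Minv * X) key
    simp only [← Matrix.mul_assoc, hMr, Matrix.one_mul, Matrix.mul_one] at h
    exact h
  rw [hMH]
  exact hMr
end

section
/- Under the hypotheses of the unitarity lemma (f affine, M_f nonsingular, normalized with |λ| = 2^{−r/2}), the (n+r)×n matrix C_f formed by stacking A (the support matrix over 𝔽₂) on top of C₃ (mod 2) has trivial kernel over 𝔽₂, i.e., C_f w = 0 implies w = 0. -/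
open Matrix

lemma I_pow_mod_four (u : ℕ) : Complex.I ^ u = Complex.I ^ (u % 4) := by
  conv_lhs => rw [← Nat.div_add_mod u 4]
  rw [pow_add, pow_mul, Complex.I_pow_four, one_pow, one_mul]

/-- Under the hypotheses of the unitarity lemma, the stacked matrix
C_f = [A; C₃ mod 2] has trivial kernel over 𝔽₂. -/
theorem affine_Cf_nonsingular (n r : ℕ) (hr : r ≤ n)
    (A : Matrix (Fin (n - r)) (Fin n) (ZMod 2))
    (B : Matrix (Fin (n - r)) (Fin r) (ZMod 2))
    (b : Fin (n - r) → ZMod 2)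
    (C₁ : Matrix (Fin n) (Fin n) ℤ) (hC₁ : C₁.IsSymm)
    (C₂ : Matrix (Fin r) (Fin r) ℤ) (hC₂ : C₂.IsSymm)
    (C₃ : Matrix (Fin r) (Fin n) ℤ)
    (μ : ℂ) (hμ : ‖μ‖ = (2 : ℝ) ^ (-(r : ℝ) / 2))
    (M : Matrix (Fin n → ZMod 2) ((Fin r → ZMod 2) × (Fin (n - r) → ZMod 2)) ℂ)
    (hM : ∀ x y, M x y =
      μ * (if y.2 = A.mulVec x + B.mulVec y.1 + b then 1 else 0) *
        Complex.I ^ (((iv x ⬝ᵥ C₁.mulVec (iv x) + iv y.1 ⬝ᵥ C₂.mulVec (iv y.1)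
          + 2 * (iv y.1 ⬝ᵥ C₃.mulVec (iv x))) % 4).toNat))
    (hns : ∃ Minv : Matrix ((Fin r → ZMod 2) × (Fin (n - r) → ZMod 2)) (Fin n → ZMod 2) ℂ,
      M * Minv = 1 ∧ Minv * M = 1) :
    ∀ w : Fin n → ZMod 2,
      A.mulVec w = 0 → (C₃.map (Int.cast : ℤ → ZMod 2)).mulVec w = 0 → w = 0 := by
  intro w hA3 hC3
  by_contra hw
  obtain ⟨Minv, hMl, hMr⟩ := hns
  set a : ℤ := iv w ⬝ᵥ C₁.mulVec (iv w) with ha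
  set α : ℂ := Complex.I ^ ((a % 4).toNat) with hα
  have hiv0 : iv (0 : Fin n → ZMod 2) = 0 := by
    funext i; simp [iv]
  -- each entry of C₃ · (iv w) is even
  have heven : ∀ j : Fin r, (2:ℤ) ∣ (C₃.mulVec (iv w)) j := by
    intro j
    have h := congrFun hC3 j
    have h2 : (((C₃.mulVec (iv w)) j : ℤ) : ZMod 2) = 0 := by
      simp only [Matrix.mulVec, dotProduct, Matrix.map_apply, Pi.zero_apply] at h ⊢
      push_cast
      rw [← h]
      apply Finset.sum_congr rfl
      intro i _
      simp [iv, ZMod.natCast_val, ZMod.cast_id]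
    exact (ZMod.intCast_zmod_eq_zero_iff_dvd _ 2).mp h2
  -- row w is α times row 0
  have hrow : ∀ y, M w y = α * M 0 y := by
    intro y
    rw [hM, hM, hiv0, hA3, Matrix.mulVec_zero (A := A)]
    have hdvd : (2:ℤ) ∣ iv y.1 ⬝ᵥ C₃.mulVec (iv w) := by
      simp only [dotProduct]
      exact Finset.dvd_sum fun j _ => Dvd.dvd.mul_left (heven j) _
    obtain ⟨t, ht⟩ := hdvd
    set Q : ℤ := iv y.1 ⬝ᵥ C₂.mulVec (iv y.1) with hQ
    have hzero : (0 : Fin n → ℤ) ⬝ᵥ C₁.mulVec 0 = 0 := by simp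
    have hzero2 : iv y.1 ⬝ᵥ C₃.mulVec (0 : Fin n → ℤ) = 0 := by simp
    rw [hzero, hzero2]
    have key : Complex.I ^ (((a + Q + 2 * (iv y.1 ⬝ᵥ C₃.mulVec (iv w))) % 4).toNat)
        = α * Complex.I ^ (((0 + Q + 2 * 0) % 4).toNat) := by
      rw [hα, ← pow_add, I_pow_mod_four ((a % 4).toNat + (((0 + Q + 2 * 0) % 4).toNat)),
        I_pow_mod_four (((a + Q + 2 * (iv y.1 ⬝ᵥ C₃.mulVec (iv w))) % 4).toNat)]
      congr 1
      omega
    rw [key]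
    ring
  -- contradiction with invertibility
  have h1 : (M * Minv) w 0 = α * ((M * Minv) 0 0) := by
    simp only [Matrix.mul_apply]
    rw [Finset.mul_sum]
    apply Finset.sum_congr rfl
    intro y _
    rw [hrow y]; ring
  rw [hMl] at h1
  rw [Matrix.one_apply_ne hw, Matrix.one_apply_eq, mul_one] at h1
  exact pow_ne_zero _ Complex.I_ne_zero h1.symm
end

section
/- Every nonsingular signature matrix of an affine signature is, up to multiplication by a nonzero complex scalar, a unitary matrix: 𝒢𝒜_n / U(1) = 𝒰𝒜_n / U(1). -/
open Matrix

/-- The set 𝒜ₙ of signature matrices of affine signatures of arity 2n. -/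
def AffMats (n : ℕ) : Set (Matrix (Fin n → ZMod 2) (Fin n → ZMod 2) ℂ) :=
  {M | ∃ f, IsAffine (2 * n) f ∧ M = sigMatrix n f}

lemma zmod2_val_add (p q : ZMod 2) : (((p+q).val : ℤ)) = p.val + q.val - 2*p.val*q.val := by
  revert p q; decide

lemma zmod2_cast_val (p : ZMod 2) : ((p.val : ZMod 2)) = p := by revert p; decide

lemma zmod2_add_self (p : ZMod 2) : p + p = 0 := by revert p; decide

lemma zmod2_sub (p q : ZMod 2) : p - q = p + q := by revert p q; decide

lemma zmod2_eq_one_of_ne_zero (p : ZMod 2) (h : p ≠ 0) : p = 1 := by revert p; decide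

lemma zmod2_ne_add (p q : ZMod 2) (h : p ≠ q) : p + q = 1 := by revert p q; decide

lemma I_pow_mod (k : ℕ) : Complex.I ^ (k % 4) = Complex.I ^ k := by
  conv_rhs => rw [← Nat.div_add_mod k 4]
  rw [pow_add, pow_mul, Complex.I_pow_four, one_pow, one_mul]

lemma I_star_pow (a b : ℕ) : (Complex.I)^a * star (Complex.I ^ b) = Complex.I ^ ((a:ℤ) - b) := by
  rw [star_pow, Complex.star_def, Complex.conj_I, ← Complex.inv_I, inv_pow,
    zpow_sub₀ Complex.I_ne_zero, zpow_natCast, zpow_natCast, div_eq_mul_inv]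

lemma I_pow_star_self (b : ℕ) : Complex.I ^ b * star (Complex.I ^ b) = 1 := by
  rw [star_pow, Complex.star_def, Complex.conj_I, ← mul_pow]
  simp [Complex.I_mul_I]

lemma neg_one_zpow_parity (t : ℤ) : (-1 : ℂ)^t = if (t : ZMod 2) = 0 then 1 else -1 := by
  rcases Int.even_or_odd t with h | h
  · rw [h.neg_one_zpow, if_pos]
    have : ((2:ℕ):ℤ) ∣ t := by exact_mod_cast h.two_dvd
    rwa [← ZMod.intCast_zmod_eq_zero_iff_dvd] at this
  · rw [h.neg_one_zpow, if_neg]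
    intro hc
    rw [ZMod.intCast_zmod_eq_zero_iff_dvd] at hc
    obtain ⟨k, hk⟩ := hc
    have : Even t := ⟨k, by push_cast at hk; omega⟩
    exact (Int.not_odd_iff_even.mpr this) h

lemma not_isUnit_of_vecMul_eq_zero {ι : Type*} [Fintype ι] [DecidableEq ι]
    (M : Matrix ι ι ℂ) (v : ι → ℂ) (hv : v ≠ 0) (h : Matrix.vecMul v M = 0) : ¬ IsUnit M := by
  intro hU
  obtain ⟨N, h1, h2⟩ := isUnit_iff_exists.mp hU
  apply hv
  calc v = vecMul v (M * N) := by rw [h1, vecMul_one]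
    _ = vecMul (vecMul v M) N := by rw [vecMul_vecMul]
    _ = 0 := by rw [h, zero_vecMul]

lemma not_isUnit_of_rows_prop {ι : Type*} [Fintype ι] [DecidableEq ι]
    (M : Matrix ι ι ℂ) (x x' : ι) (hxx : x ≠ x') (κ : ℂ)
    (h : ∀ y, M x y = κ * M x' y) : ¬ IsUnit M := by
  apply not_isUnit_of_vecMul_eq_zero M
    (fun i => (if i = x then 1 else 0) - κ * (if i = x' then 1 else 0))
  · intro hc
    have := congrFun hc x
    simp [if_neg hxx] at this
  · funext y
    simp only [vecMul, dotProduct, sub_mul, ite_mul, one_mul, zero_mul, mul_assoc]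
    simp only [mul_ite, mul_zero]
    rw [Finset.sum_sub_distrib, Finset.sum_ite_eq', Finset.sum_ite_eq']
    simp [h y, Pi.zero_apply]

lemma not_isUnit_of_row_zero {ι : Type*} [Fintype ι] [DecidableEq ι]
    (M : Matrix ι ι ℂ) (x : ι) (h : ∀ y, M x y = 0) : ¬ IsUnit M := by
  apply not_isUnit_of_vecMul_eq_zero M (fun i => if i = x then 1 else 0)
  · intro hc
    have := congrFun hc x
    simp at this
  · funext y
    simp only [vecMul, dotProduct, ite_mul, one_mul, zero_mul]
    rw [Finset.sum_ite_eq']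
    simp [h y]

set_option maxHeartbeats 1000000 in
lemma main_key {n m t : ℕ} (lam : ℂ)
    (A : Matrix (Fin m) (Fin (2*n+1)) (ZMod 2))
    (α : Fin t → Fin (2*n+1) → ZMod 2)
    (M : Matrix (Fin n → ZMod 2) (Fin n → ZMod 2) ℂ)
    (hM : ∀ x y, M x y = lam * (if A.mulVec (ext (assemble x y)) = 0 then 1 else 0) *
      Complex.I ^ ((∑ j, (∑ i, α j i * ext (assemble x y) i).val) % 4))
    (hU : IsUnit M) : ∃ r : ℝ, 0 < r ∧ M * Mᴴ = (r : ℂ) • (1 : Matrix (Fin n → ZMod 2) (Fin n → ZMod 2) ℂ) := by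
  classical
  -- split of the extended assembled vector
  set u : (Fin n → ZMod 2) → (Fin (2*n+1) → ZMod 2) :=
    fun x => Fin.snoc (fun i : Fin (2*n) => if h : (i:ℕ) < n then x ⟨i, h⟩ else 0) 1 with hu_def
  set v : (Fin n → ZMod 2) → (Fin (2*n+1) → ZMod 2) :=
    fun y => Fin.snoc (fun i : Fin (2*n) => if h : (i:ℕ) < n then 0
      else y ⟨2*n-1-i, by have := i.isLt; omega⟩) 0 with hv_def
  have hw : ∀ x y, ext (assemble x y) = u x + v y := by
    intro x y
    funext i
    refine Fin.lastCases ?_ (fun i => ?_) i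
    · simp [_root_.ext, hu_def, hv_def]
    · simp only [_root_.ext, hu_def, hv_def, Pi.add_apply, Fin.snoc_castSucc, assemble]
      by_cases h : (i:ℕ) < n
      · simp [h]
      · simp [h]
  have hv_add : ∀ y y', v (y + y') = v y + v y' := by
    intro y y'
    funext i
    refine Fin.lastCases ?_ (fun i => ?_) i
    · simp [hv_def]
    · simp only [hv_def, Pi.add_apply, Fin.snoc_castSucc]
      by_cases h : (i:ℕ) < n <;> simp [h]
  have hv_zero : v 0 = 0 := by
    funext i
    refine Fin.lastCases ?_ (fun i => ?_) i
    · simp [hv_def]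
    · simp only [hv_def, Fin.snoc_castSucc]
      by_cases h : (i:ℕ) < n <;> simp [h]
  set Φ : (Fin n → ZMod 2) → (Fin m → ZMod 2) := fun y => A.mulVec (v y) with hΦ_def
  set cx : (Fin n → ZMod 2) → (Fin m → ZMod 2) := fun x => A.mulVec (u x) with hcx_def
  have hchm : ∀ c : Fin m → ZMod 2, c + c = 0 := fun c => funext fun i => zmod2_add_self _
  have hchn : ∀ c : Fin n → ZMod 2, c + c = 0 := fun c => funext fun i => zmod2_add_self _
  have hΦ_add : ∀ y y', Φ (y + y') = Φ y + Φ y' := by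
    intro y y'
    simp only [hΦ_def, hv_add, Matrix.mulVec_add]
  have hP : ∀ x y, (A.mulVec (ext (assemble x y)) = 0) ↔ Φ y = cx x := by
    intro x y
    rw [hw, Matrix.mulVec_add]
    change cx x + Φ y = 0 ↔ _
    constructor
    · intro h
      exact add_left_cancel (h.trans (hchm (cx x)).symm)
    · intro h
      rw [h]
      exact hchm _
  set a : Fin t → (Fin n → ZMod 2) → ZMod 2 := fun j x => ∑ i, α j i * u x i with ha_def
  set b : Fin t → (Fin n → ZMod 2) → ZMod 2 := fun j y => ∑ i, α j i * v y i with hb_def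
  have hab : ∀ j x y, (∑ i, α j i * ext (assemble x y) i) = a j x + b j y := by
    intro j x y
    rw [hw]
    simp only [Pi.add_apply, mul_add, Finset.sum_add_distrib, ha_def, hb_def]
  have hb_add : ∀ j y y', b j (y + y') = b j y + b j y' := by
    intro j y y'
    simp only [hb_def, hv_add, Pi.add_apply, mul_add, Finset.sum_add_distrib]
  have hb_zero : ∀ j, b j 0 = 0 := by
    intro j
    simp [hb_def, hv_zero]
  set sE : (Fin n → ZMod 2) → (Fin n → ZMod 2) → ℕ :=
    fun x y => ∑ j, (∑ i, α j i * ext (assemble x y) i).val with hsE_def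
  set C : (Fin n → ZMod 2) → (Fin n → ZMod 2) → ℤ :=
    fun x x' => ∑ j, (((a j x).val : ℤ) - ((a j x').val : ℤ)) with hC_def
  set L : (Fin n → ZMod 2) → (Fin n → ZMod 2) → (Fin n → ZMod 2) → ZMod 2 :=
    fun x x' y => ∑ j, ((a j x) + (a j x')) * b j y with hL_def
  have hL_add : ∀ x x' y y', L x x' (y + y') = L x x' y + L x x' y' := by
    intro x x' y y'
    simp only [hL_def, hb_add, mul_add, Finset.sum_add_distrib]
  have hL_zero : ∀ x x', L x x' 0 = 0 := by
    intro x x'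
    simp [hL_def, hb_zero]
  -- the phase ratio identity
  have hratio : ∀ x x' y, Complex.I ^ (sE x y) * star (Complex.I ^ (sE x' y))
      = Complex.I ^ (C x x') * (if L x x' y = 0 then 1 else -1) := by
    intro x x' y
    rw [I_star_pow]
    set E : ℤ := ∑ j, ((((a j x).val : ℤ) - ((a j x').val : ℤ)) * ((b j y).val : ℤ)) with hE_def
    have hsub : (sE x y : ℤ) - (sE x' y : ℤ) = C x x' - 2 * E := by
      simp only [hsE_def, hC_def, hE_def, hab]
      push_cast
      rw [← Finset.sum_sub_distrib, Finset.mul_sum, ← Finset.sum_sub_distrib]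
      apply Finset.sum_congr rfl
      intro j _
      rw [zmod2_val_add, zmod2_val_add]
      ring
    rw [hsub]
    have h2 : Complex.I ^ (C x x' - 2 * E) = Complex.I ^ (C x x') * ((-1 : ℂ)) ^ (-E) := by
      rw [zpow_sub₀ Complex.I_ne_zero, _root_.zpow_mul, div_eq_mul_inv, ← _root_.zpow_neg]
      congr 2
      rw [show ((2:ℤ)) = ((2:ℕ):ℤ) from rfl, zpow_natCast, Complex.I_sq]
    rw [h2, neg_one_zpow_parity]
    congr 1
    have hcast : (((-E : ℤ)) : ZMod 2) = L x x' y := by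
      have h1 : ((E : ℤ) : ZMod 2) = L x x' y := by
        rw [hE_def, hL_def]
        push_cast
        apply Finset.sum_congr rfl
        intro j _
        rw [zmod2_cast_val, zmod2_cast_val, zmod2_cast_val, zmod2_sub]
      rw [Int.cast_neg, h1]
      have := zmod2_add_self (L x x' y)
      have h2 : -(L x x' y) = L x x' y := by
        rw [neg_eq_iff_add_eq_zero]
        exact this
      exact h2
    rw [hcast]
  set T : (Fin n → ZMod 2) → (Fin n → ZMod 2) → Finset (Fin n → ZMod 2) :=
    fun x x' => Finset.univ.filter (fun y => Φ y = cx x ∧ Φ y = cx x') with hT_def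
  have hMM : ∀ x x', (M * Mᴴ) x x' = lam * star lam * Complex.I ^ (C x x') *
      ∑ y ∈ T x x', (if L x x' y = 0 then (1:ℂ) else -1) := by
    intro x x'
    rw [Matrix.mul_apply]
    have step : ∀ y, M x y * Mᴴ y x' =
        (if Φ y = cx x ∧ Φ y = cx x' then
          lam * star lam * Complex.I ^ (C x x') * (if L x x' y = 0 then (1:ℂ) else -1) else 0) := by
      intro y
      rw [Matrix.conjTranspose_apply, hM x y, hM x' y, I_pow_mod, I_pow_mod]
      by_cases h1 : Φ y = cx x
      · by_cases h2 : Φ y = cx x'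
        · rw [if_pos ((hP x y).mpr h1), if_pos ((hP x' y).mpr h2), if_pos (⟨h1, h2⟩ : _ ∧ _)]
          simp only [mul_one, star_mul']
          have hr := hratio x x' y
          linear_combination (lam * star lam) * hr
        · rw [if_neg (fun h => h2 ((hP x' y).mp h)), if_neg (fun h : _ ∧ _ => h2 (h.2))]
          simp
      · rw [if_neg (fun h => h1 ((hP x y).mp h)), if_neg (fun h : _ ∧ _ => h1 (h.1))]
        simp
    calc (∑ y, M x y * Mᴴ y x')
        = ∑ y ∈ T x x', lam * star lam * Complex.I ^ (C x x') *
            (if L x x' y = 0 then (1:ℂ) else -1) := by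
          rw [hT_def, Finset.sum_filter]
          exact Finset.sum_congr rfl (fun y _ => step y)
      _ = _ := by rw [Finset.mul_sum]
  set N : (Fin n → ZMod 2) → ℕ := fun x => (T x x).card with hN_def
  have hrow : ∀ x, ∃ y, Φ y = cx x := by
    intro x
    by_contra hc
    push_neg at hc
    refine not_isUnit_of_row_zero M x (fun y => ?_) hU
    rw [hM x y, if_neg (fun h => hc y ((hP x y).mp h))]
    ring
  have hlam : lam ≠ 0 := by
    intro h0
    refine not_isUnit_of_row_zero M (fun _ => 0) (fun y => ?_) hU
    rw [hM _ y, h0, zero_mul, zero_mul]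
  have hNpos : ∀ x, 0 < N x := by
    intro x
    obtain ⟨y, hy⟩ := hrow x
    apply Finset.card_pos.mpr
    exact ⟨y, Finset.mem_filter.mpr ⟨Finset.mem_univ y, hy, hy⟩⟩
  have hNconst : ∀ x x', N x = N x' := by
    intro x x'
    obtain ⟨y0, hy0⟩ := hrow x
    obtain ⟨y1, hy1⟩ := hrow x'
    apply Finset.card_bij (fun y _ => y + (y0 + y1))
    · intro y hy
      rw [Finset.mem_filter] at hy ⊢
      obtain ⟨-, hyx, -⟩ := hy
      have hmem : Φ (y + (y0 + y1)) = cx x' := by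
        rw [hΦ_add, hΦ_add, hyx, hy0, hy1, ← add_assoc, hchm (cx x), zero_add]
      exact ⟨Finset.mem_univ _, hmem, hmem⟩
    · intro y hy z hz h
      exact add_right_cancel h
    · intro z hz
      rw [Finset.mem_filter] at hz
      obtain ⟨-, hzx, -⟩ := hz
      refine ⟨z + (y0 + y1), ?_, ?_⟩
      · rw [Finset.mem_filter]
        have hmem : Φ (z + (y0 + y1)) = cx x := by
          rw [hΦ_add, hΦ_add, hzx, hy0, hy1, ← add_assoc, add_comm (cx x') (cx x),
            add_assoc, hchm (cx x'), add_zero]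
        exact ⟨Finset.mem_univ _, hmem, hmem⟩
      · rw [add_assoc, hchn (y0 + y1), add_zero]
  have hdiag : ∀ x, (M * Mᴴ) x x = lam * star lam * (N x : ℂ) := by
    intro x
    rw [hMM x x]
    have hC0 : C x x = 0 := by simp [hC_def]
    have hL0 : ∀ y, L x x y = 0 := by
      intro y
      rw [hL_def]
      apply Finset.sum_eq_zero
      intro j _
      rw [zmod2_add_self, zero_mul]
    rw [hC0, zpow_zero, mul_one]
    have hsum1 : ∑ y ∈ T x x, (if L x x y = 0 then (1:ℂ) else -1) = (N x : ℂ) := by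
      rw [Finset.sum_congr rfl (fun y _ => by rw [if_pos (hL0 y)]), Finset.sum_const,
        nsmul_eq_mul, mul_one, hN_def]
    rw [hsum1]
  have hoff : ∀ x x', x ≠ x' → (M * Mᴴ) x x' = 0 := by
    intro x x' hxx
    rw [hMM x x']
    rcases Finset.eq_empty_or_nonempty (T x x') with hTe | ⟨y0, hy0⟩
    · rw [hTe, Finset.sum_empty, mul_zero]
    · obtain ⟨-, h0x, h0x'⟩ := Finset.mem_filter.mp hy0
      have hcc : cx x = cx x' := h0x ▸ h0x'
      by_cases hLc : ∀ y ∈ T x x', L x x' y = L x x' y0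
      · exfalso
        refine not_isUnit_of_rows_prop M x x' hxx
          (Complex.I ^ (C x x') * (if L x x' y0 = 0 then (1:ℂ) else -1)) (fun y => ?_) hU
        by_cases hy : Φ y = cx x
        · have hy' : Φ y = cx x' := hcc ▸ hy
          have hyT : y ∈ T x x' := Finset.mem_filter.mpr ⟨Finset.mem_univ _, hy, hy'⟩
          rw [hM x y, hM x' y, if_pos ((hP x y).mpr hy), if_pos ((hP x' y).mpr hy'),
            I_pow_mod, I_pow_mod, mul_one]
          have hr := hratio x x' y
          rw [hLc y hyT] at hr
          have hinv := I_pow_star_self (sE x' y)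
          linear_combination (lam * Complex.I ^ (sE x' y)) * hr -
            (lam * Complex.I ^ (sE x y)) * hinv
        · have hy' : ¬ Φ y = cx x' := fun h => hy (by rw [hcc]; exact h)
          rw [hM x y, hM x' y, if_neg (fun h => hy ((hP x y).mp h)),
            if_neg (fun h => hy' ((hP x' y).mp h))]
          ring
      · push_neg at hLc
        obtain ⟨y1, hy1T, hy1⟩ := hLc
        have h1x : Φ y1 = cx x := (Finset.mem_filter.mp hy1T).2.1
        have hΦd : Φ (y0 + y1) = 0 := by
          rw [hΦ_add, h0x, h1x, hchm]
        have hLd : L x x' (y0 + y1) = 1 := by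
          rw [hL_add]
          exact zmod2_ne_add _ _ (Ne.symm hy1)
        have hd0 : y0 + y1 ≠ 0 := by
          intro hc
          rw [hc, hL_zero] at hLd
          exact absurd hLd (by decide)
        have hsum : ∑ y ∈ T x x', (if L x x' y = 0 then (1:ℂ) else -1) = 0 := by
          apply Finset.sum_involution (fun y _ => y + (y0 + y1))
          · intro y hy
            rw [hL_add, hLd]
            by_cases hLy : L x x' y = 0
            · rw [if_pos hLy, hLy, zero_add, if_neg (by decide)]
              ring
            · rw [if_neg hLy, if_pos (by rw [zmod2_eq_one_of_ne_zero _ hLy]; decide)]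
              ring
          · intro y hy hne hc
            apply hd0
            have := congrArg (fun w => w - y) hc
            simpa [add_comm, add_sub_cancel_left] using this
          · intro y hy
            rw [Finset.mem_filter] at hy ⊢
            refine ⟨Finset.mem_univ _, ?_, ?_⟩
            · rw [hΦ_add, hΦd, add_zero]; exact hy.2.1
            · rw [hΦ_add, hΦd, add_zero]; exact hy.2.2
          · intro y hy
            rw [add_assoc, hchn (y0 + y1), add_zero]
        rw [hsum, mul_zero]
  set x₀ : Fin n → ZMod 2 := fun _ => 0 with hx₀
  refine ⟨Complex.normSq lam * (N x₀ : ℝ), ?_, ?_⟩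
  · have h1 : (0:ℝ) < (N x₀ : ℝ) := by exact_mod_cast hNpos x₀
    exact mul_pos (Complex.normSq_pos.mpr hlam) h1
  · apply Matrix.ext
    intro x x'
    by_cases hxx : x = x'
    · subst hxx
      rw [hdiag x]
      rw [Matrix.smul_apply, Matrix.one_apply_eq, smul_eq_mul, mul_one]
      rw [hNconst x x₀]
      have hls : lam * star lam = (Complex.normSq lam : ℂ) := by
        rw [Complex.star_def, Complex.mul_conj]
      rw [hls]
      push_cast
      ring
    · rw [hoff x x' hxx]
      rw [Matrix.smul_apply, Matrix.one_apply_ne hxx, smul_eq_mul, mul_zero]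

/-- 𝒢𝒜ₙ/U(1) = 𝒰𝒜ₙ/U(1): every nonsingular affine signature matrix is,
up to a nonzero complex scalar, unitary; and every unitary affine signature
matrix is nonsingular. -/
theorem GA_eq_UA (n : ℕ) :
    (∀ M ∈ AffMats n, IsUnit M →
      ∃ c : ℂ, c ≠ 0 ∧ c • M ∈ AffMats n ∧
        (c • M) * (c • M)ᴴ = 1 ∧ (c • M)ᴴ * (c • M) = 1) ∧
    (∀ M ∈ AffMats n, M * Mᴴ = 1 → Mᴴ * M = 1 → IsUnit M) := by
  constructor
  · rintro M ⟨f, ⟨lam, m, t, A, α, hf⟩, rfl⟩ hU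
    have hM : ∀ x y, (sigMatrix n f) x y = lam *
        (if A.mulVec (ext (assemble x y)) = 0 then 1 else 0) *
        Complex.I ^ ((∑ j, (∑ i, α j i * ext (assemble x y) i).val) % 4) := by
      intro x y
      exact hf (assemble x y)
    obtain ⟨r, hr, hG⟩ := main_key lam A α (sigMatrix n f) hM hU
    refine ⟨((Real.sqrt r)⁻¹ : ℝ), ?_, ?_, ?_, ?_⟩
    · simp only [ne_eq, Complex.ofReal_eq_zero, inv_eq_zero]
      exact (Real.sqrt_ne_zero'.mpr hr)
    · refine ⟨fun z => ((Real.sqrt r)⁻¹ : ℝ) * f z, ⟨((Real.sqrt r)⁻¹ : ℝ) * lam, m, t, A, α, ?_⟩, ?_⟩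
      · intro x; simp only []; rw [hf x]; ring
      · funext x y
        simp [sigMatrix, Matrix.smul_apply]
    · have hc : ((((Real.sqrt r)⁻¹ : ℝ)) : ℂ) • (sigMatrix n f) = (((Real.sqrt r)⁻¹ : ℝ) : ℂ) • sigMatrix n f := rfl
      rw [Matrix.conjTranspose_smul]
      rw [Matrix.smul_mul, Matrix.mul_smul, hG]
      rw [smul_smul, smul_smul]
      have : star ((((Real.sqrt r)⁻¹ : ℝ)) : ℂ) = (((Real.sqrt r)⁻¹ : ℝ) : ℂ) := by
        simp [Complex.star_def, Complex.conj_ofReal]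
      rw [this]
      have hs : (((Real.sqrt r)⁻¹ : ℝ) : ℂ) * ((((Real.sqrt r)⁻¹ : ℝ)) : ℂ) * (r : ℂ) = 1 := by
        rw [← Complex.ofReal_mul, ← Complex.ofReal_mul]
        norm_cast
        rw [← mul_inv, Real.mul_self_sqrt hr.le]
        field_simp
      rw [hs, one_smul]
    · rw [mul_eq_one_comm]
      rw [Matrix.conjTranspose_smul]
      rw [Matrix.smul_mul, Matrix.mul_smul, hG]
      rw [smul_smul, smul_smul]
      have : star ((((Real.sqrt r)⁻¹ : ℝ)) : ℂ) = (((Real.sqrt r)⁻¹ : ℝ) : ℂ) := by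
        simp [Complex.star_def, Complex.conj_ofReal]
      rw [this]
      have hs : (((Real.sqrt r)⁻¹ : ℝ) : ℂ) * ((((Real.sqrt r)⁻¹ : ℝ)) : ℂ) * (r : ℂ) = 1 := by
        rw [← Complex.ofReal_mul, ← Complex.ofReal_mul]
        norm_cast
        rw [← mul_inv, Real.mul_self_sqrt hr.le]
        field_simp
      rw [hs, one_smul]
  · rintro M ⟨f, hf, rfl⟩ h1 h2
    exact IsUnit.of_mul_eq_one _ h1
end

section
/- If M_f is a unitary affine signature matrix in 𝒰𝒜_n and P ∈ 𝒫_n is an n-qubit Pauli group element, then M_f P M_f* is again in 𝒫_n; consequently 𝒢𝒜_n / U(1) ⊆ 𝒞_n. -/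
open Matrix

noncomputable def pI : Matrix (ZMod 2) (ZMod 2) ℂ := 1
noncomputable def pX : Matrix (ZMod 2) (ZMod 2) ℂ :=
  Matrix.of fun x y => if x = y then 0 else 1
noncomputable def pY : Matrix (ZMod 2) (ZMod 2) ℂ :=
  Matrix.of fun x y => if x = y then 0 else if x = 0 then -Complex.I else Complex.I
noncomputable def pZ : Matrix (ZMod 2) (ZMod 2) ℂ :=
  Matrix.of fun x y => if x = y then (if x = 0 then 1 else -1) else 0

noncomputable def tensorP (n : ℕ) (σ : Fin n → Matrix (ZMod 2) (ZMod 2) ℂ) :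
    Matrix (Fin n → ZMod 2) (Fin n → ZMod 2) ℂ :=
  Matrix.of fun x y => ∏ k, σ k (x k) (y k)

noncomputable def pauliUnits (n : ℕ) :
    Set (Matrix (Fin n → ZMod 2) (Fin n → ZMod 2) ℂ)ˣ :=
  {u | ∃ σ : Fin n → Matrix (ZMod 2) (ZMod 2) ℂ,
    (∀ k, σ k ∈ ({pI, pX, pY, pZ} : Set (Matrix (ZMod 2) (ZMod 2) ℂ))) ∧
    (u : Matrix (Fin n → ZMod 2) (Fin n → ZMod 2) ℂ) = tensorP n σ}

/-- Membership in the Pauli group 𝒫ₙ. -/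
def InPauli (n : ℕ) (P : Matrix (Fin n → ZMod 2) (Fin n → ZMod 2) ℂ) : Prop :=
  ∃ u ∈ Subgroup.closure (pauliUnits n),
    (u : Matrix (Fin n → ZMod 2) (Fin n → ZMod 2) ℂ) = P


namespace UA

abbrev W (n : ℕ) := Fin n → ZMod 2

lemma z2_add_self (x : ZMod 2) : x + x = 0 := by revert x; decide
lemma vadd_self {n : ℕ} (v : W n) : v + v = 0 := funext fun i => z2_add_self (v i)
lemma z2_cases (a : ZMod 2) : a = 0 ∨ a = 1 := by revert a; decide

noncomputable def zeta (z : ZMod 4) : ℂ := Complex.I ^ z.val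
def m1 (s : ZMod 2) : ℂ := (-1 : ℂ) ^ s.val

lemma I_pow_mod (m : ℕ) : Complex.I ^ (m % 4) = Complex.I ^ m := by
  conv_rhs => rw [← Nat.div_add_mod m 4, pow_add, pow_mul, Complex.I_pow_four, one_pow, one_mul]

lemma zeta_natCast (m : ℕ) : zeta (m : ZMod 4) = Complex.I ^ m := by
  rw [zeta, ZMod.val_natCast, I_pow_mod]

lemma zeta_add (z w : ZMod 4) : zeta (z + w) = zeta z * zeta w := by
  rw [zeta, zeta, zeta, ZMod.val_add, I_pow_mod, pow_add]

lemma zeta_zero : zeta 0 = 1 := by simp [zeta]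

lemma zeta_cancel (z : ZMod 4) : zeta z * zeta (-z) = 1 := by
  rw [← zeta_add]; simp [zeta_zero]

lemma conj_zeta (z : ZMod 4) : (starRingEnd ℂ) (zeta z) = zeta (-z) := by
  have h1 : zeta z * zeta (-z) = 1 := zeta_cancel z
  have h2 : (starRingEnd ℂ) (zeta z) * zeta z = 1 := by
    rw [mul_comm, Complex.mul_conj]
    rw [zeta]
    norm_cast
    rw [map_pow]
    simp
  calc (starRingEnd ℂ) (zeta z) = (starRingEnd ℂ) (zeta z) * (zeta z * zeta (-z)) := by
        rw [h1, mul_one]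
    _ = ((starRingEnd ℂ) (zeta z) * zeta z) * zeta (-z) := by ring
    _ = zeta (-z) := by rw [h2, one_mul]

lemma neg_one_pow_mod (a : ℕ) : (-1:ℂ) ^ (a % 2) = (-1:ℂ) ^ a := by
  conv_rhs => rw [← Nat.div_add_mod a 2, pow_add, pow_mul]
  norm_num

lemma m1_add (s u : ZMod 2) : m1 (s + u) = m1 s * m1 u := by
  rw [m1, m1, m1, ZMod.val_add, neg_one_pow_mod, pow_add]

lemma m1_zero : m1 0 = 1 := rfl
lemma m1_one : m1 1 = -1 := by rw [m1, show (1 : ZMod 2).val = 1 from rfl, pow_one]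
lemma m1_mul_self (s : ZMod 2) : m1 s * m1 s = 1 := by
  rcases z2_cases s with h | h <;> simp [h, m1_zero, m1_one]
lemma conj_m1 (s : ZMod 2) : (starRingEnd ℂ) (m1 s) = m1 s := by
  rcases z2_cases s with h | h <;> simp [h, m1_zero, m1_one]
lemma m1_ne_zero (s : ZMod 2) : m1 s ≠ 0 := by
  rcases z2_cases s with h | h <;> simp [h, m1_zero, m1_one]

lemma zeta_two_mul (w : ZMod 2) : zeta (2 * ((w.val : ℕ) : ZMod 4)) = m1 w := by
  rcases z2_cases w with h | h <;> subst h
  · simp [zeta_zero, m1_zero]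
  · show zeta (2 * ((1 : ℕ) : ZMod 4)) = m1 1
    rw [m1_one]
    norm_num [zeta]
    rw [show ((2 : ZMod 4)).val = 2 from rfl, Complex.I_sq]

lemma m1_eq_I_pow (s : ZMod 2) : m1 s = Complex.I ^ (2 * s.val) := by
  rw [m1, pow_mul, Complex.I_sq]

lemma sum_zmod2 (f : ZMod 2 → ℂ) : ∑ z, f z = f 0 + f 1 := by
  rw [show (Finset.univ : Finset (ZMod 2)) = {0, 1} from by decide]
  rw [Finset.sum_insert (by decide), Finset.sum_singleton]

/-- 2x2 matrix extensionality helper. -/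
lemma mat2_ext {P Q : Matrix (ZMod 2) (ZMod 2) ℂ}
    (h00 : P 0 0 = Q 0 0) (h01 : P 0 1 = Q 0 1) (h10 : P 1 0 = Q 1 0) (h11 : P 1 1 = Q 1 1) :
    P = Q := by
  funext p q
  rcases z2_cases p with hp | hp <;> rcases z2_cases q with hq | hq <;> subst hp <;> subst hq <;>
    assumption

lemma mul2_apply (P Q : Matrix (ZMod 2) (ZMod 2) ℂ) (p q : ZMod 2) :
    (P * Q) p q = P p 0 * Q 0 q + P p 1 * Q 1 q := by
  rw [Matrix.mul_apply, sum_zmod2]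

-- entries of the basic matrices
lemma pI_apply (p q : ZMod 2) : pI p q = if p = q then 1 else 0 := Matrix.one_apply
lemma pX_apply (p q : ZMod 2) : pX p q = if p = q then 0 else 1 := rfl
lemma pY_apply (p q : ZMod 2) :
    pY p q = if p = q then 0 else if p = 0 then -Complex.I else Complex.I := rfl
lemma pZ_apply (p q : ZMod 2) : pZ p q = if p = q then (if p = 0 then 1 else -1) else 0 := rfl

lemma pI_sq : pI * pI = 1 := by rw [pI, one_mul]
lemma pX_sq : pX * pX = 1 := by
  apply mat2_ext <;> simp [mul2_apply, pX_apply, Matrix.one_apply]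
lemma pY_sq : pY * pY = 1 := by
  apply mat2_ext <;> simp [mul2_apply, pY_apply, Matrix.one_apply, Complex.I_mul_I]
lemma pZ_sq : pZ * pZ = 1 := by
  apply mat2_ext <;> simp [mul2_apply, pZ_apply, Matrix.one_apply]

lemma pXZ : pX * pZ = (-Complex.I) • pY := by
  apply mat2_ext <;>
    simp [mul2_apply, pX_apply, pZ_apply, pY_apply, Matrix.smul_apply, Complex.I_mul_I]
lemma pY_eq : pY = Complex.I • (pX * pZ) := by
  rw [pXZ, smul_smul]
  norm_num [Complex.I_mul_I]


lemma tensorP_apply (n : ℕ) (σ : Fin n → Matrix (ZMod 2) (ZMod 2) ℂ) (x y : W n) :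
    tensorP n σ x y = ∏ k, σ k (x k) (y k) := rfl

lemma tensorP_mul (n : ℕ) (σ τ : Fin n → Matrix (ZMod 2) (ZMod 2) ℂ) :
    tensorP n σ * tensorP n τ = tensorP n (fun k => σ k * τ k) := by
  funext x y
  rw [Matrix.mul_apply, tensorP_apply]
  have : ∀ k, (σ k * τ k) (x k) (y k) = ∑ v : ZMod 2, σ k (x k) v * τ k v (y k) := fun k =>
    Matrix.mul_apply
  simp_rw [this]
  rw [Finset.prod_univ_sum, Fintype.piFinset_univ]
  apply Finset.sum_congr rfl
  intro z _
  rw [tensorP_apply, tensorP_apply, ← Finset.prod_mul_distrib]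

lemma tensorP_one (n : ℕ) : tensorP n (fun _ => (1 : Matrix (ZMod 2) (ZMod 2) ℂ)) = 1 := by
  funext x y
  rw [tensorP_apply, Matrix.one_apply]
  by_cases h : x = y
  · subst h; simp [Matrix.one_apply]
  · obtain ⟨k, hk⟩ : ∃ k, x k ≠ y k := by
      by_contra hc
      push_neg at hc
      exact h (funext hc)
    rw [if_neg h]
    exact Finset.prod_eq_zero (Finset.mem_univ k) (by simp [Matrix.one_apply, hk])

lemma tensorP_smul (n : ℕ) (c : Fin n → ℂ) (σ : Fin n → Matrix (ZMod 2) (ZMod 2) ℂ) :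
    tensorP n (fun k => c k • σ k) = (∏ k, c k) • tensorP n σ := by
  funext x y
  rw [tensorP_apply, Matrix.smul_apply, tensorP_apply, smul_eq_mul, ← Finset.prod_mul_distrib]
  rfl

noncomputable def XP (s : ZMod 2) : Matrix (ZMod 2) (ZMod 2) ℂ := if s = 0 then pI else pX
noncomputable def ZP (s : ZMod 2) : Matrix (ZMod 2) (ZMod 2) ℂ := if s = 0 then pI else pZ

lemma XP_apply (s p q : ZMod 2) : XP s p q = if q = p + s then 1 else 0 := by
  rcases z2_cases s with h | h <;> subst h
  · rw [XP, if_pos rfl, pI_apply]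
    by_cases h : p = q <;> simp [h, eq_comm]
  · rw [XP, if_neg (by decide), pX_apply]
    rcases z2_cases p with hp | hp <;> rcases z2_cases q with hq | hq <;> subst hp <;> subst hq <;>
      first
      | rw [if_pos rfl, if_neg (by decide)]
      | rw [if_neg (by decide), if_pos (by decide)]

lemma ZP_apply (s p q : ZMod 2) : ZP s p q = if q = p then m1 (s * p) else 0 := by
  rcases z2_cases s with h | h <;> subst h
  · rw [ZP, if_pos rfl, pI_apply]
    by_cases h : p = q <;> simp [h, eq_comm, m1_zero]
  · rw [ZP, if_neg (by decide), pZ_apply]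
    rcases z2_cases p with hp | hp <;> rcases z2_cases q with hq | hq <;> subst hp <;> subst hq <;>
      simp [m1_zero, m1_one]

lemma XP_sq (s : ZMod 2) : XP s * XP s = 1 := by
  rcases z2_cases s with h | h <;> subst h
  · rw [XP, if_pos rfl, pI_sq]
  · rw [XP, if_neg (by decide), pX_sq]

lemma ZP_sq (s : ZMod 2) : ZP s * ZP s = 1 := by
  rcases z2_cases s with h | h <;> subst h
  · rw [ZP, if_pos rfl, pI_sq]
  · rw [ZP, if_neg (by decide), pZ_sq]

def bv {n : ℕ} (b y : W n) : ZMod 2 := ∑ k, b k * y k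

noncomputable def shiftM {n : ℕ} (a : W n) := tensorP n (fun k => XP (a k))
noncomputable def diagM {n : ℕ} (b : W n) := tensorP n (fun k => ZP (b k))
noncomputable def WeylM {n : ℕ} (a b : W n) := shiftM a * diagM b

lemma m1_sum_finset {ι : Type*} (s : Finset ι) (c : ι → ZMod 2) :
    (∏ k ∈ s, m1 (c k)) = m1 (∑ k ∈ s, c k) := by
  classical
  induction s using Finset.cons_induction with
  | empty => simp [m1_zero]
  | cons a s ha ih =>
      rw [Finset.prod_cons, Finset.sum_cons, ih, m1_add]

lemma m1_sum {n : ℕ} (c : W n) : (∏ k, m1 (c k)) = m1 (∑ k, c k) :=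
  m1_sum_finset _ c

lemma shiftM_apply {n : ℕ} (a : W n) (x y : W n) :
    shiftM a x y = if y = x + a then 1 else 0 := by
  rw [shiftM, tensorP_apply]
  simp_rw [XP_apply]
  by_cases h : y = x + a
  · subst h; simp
  · obtain ⟨k, hk⟩ : ∃ k, y k ≠ x k + a k := by
      by_contra hc
      push_neg at hc
      exact h (funext hc)
    rw [if_neg h]
    exact Finset.prod_eq_zero (Finset.mem_univ k) (by simp [hk])

lemma diagM_apply {n : ℕ} (b : W n) (x y : W n) :
    diagM b x y = if y = x then m1 (bv b x) else 0 := by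
  rw [diagM, tensorP_apply]
  simp_rw [ZP_apply]
  by_cases h : y = x
  · subst h
    rw [if_pos rfl]
    simp only [if_pos rfl]
    exact m1_sum _
  · obtain ⟨k, hk⟩ : ∃ k, y k ≠ x k := by
      by_contra hc; push_neg at hc; exact h (funext hc)
    rw [if_neg h]
    exact Finset.prod_eq_zero (Finset.mem_univ k) (by simp [hk])

lemma WeylM_apply {n : ℕ} (a b : W n) (x y : W n) :
    WeylM a b x y = if y = x + a then m1 (bv b y) else 0 := by
  rw [WeylM, Matrix.mul_apply]
  simp_rw [shiftM_apply, diagM_apply]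
  have : ∀ z : W n, (if z = x + a then (1:ℂ) else 0) * (if y = z then m1 (bv b z) else 0) =
      if z = x + a then (if y = z then m1 (bv b z) else 0) else 0 := by
    intro z; by_cases h : z = x + a <;> simp [h]
  simp_rw [this]
  rw [Finset.sum_ite_eq' Finset.univ (x + a) (fun z => if y = z then m1 (bv b z) else 0)]
  by_cases h : y = x + a <;> simp [h, eq_comm]

-- Stage 3 : Pauli group membership machinery
variable {n : ℕ}

lemma pYZ : pY * pZ = Complex.I • pX := by
  apply mat2_ext <;>
    simp [mul2_apply, pY_apply, pZ_apply, pX_apply, Matrix.smul_apply]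

noncomputable def pUnit (σ : Fin n → Matrix (ZMod 2) (ZMod 2) ℂ)
    (h : ∀ k, σ k * σ k = 1) : (Matrix (W n) (W n) ℂ)ˣ :=
  ⟨tensorP n σ, tensorP n σ,
    by rw [tensorP_mul]; simp_rw [h]; exact tensorP_one n,
    by rw [tensorP_mul]; simp_rw [h]; exact tensorP_one n⟩

lemma pUnit_val (σ : Fin n → Matrix (ZMod 2) (ZMod 2) ℂ) (h : ∀ k, σ k * σ k = 1) :
    (pUnit σ h : Matrix (W n) (W n) ℂ) = tensorP n σ := rfl

lemma XP_mem (s : ZMod 2) : XP s ∈ ({pI, pX, pY, pZ} : Set (Matrix (ZMod 2) (ZMod 2) ℂ)) := by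
  simp only [Set.mem_insert_iff, Set.mem_singleton_iff]
  rcases z2_cases s with h | h <;> subst h
  · left; rw [XP, if_pos rfl]
  · right; left; rw [XP, if_neg (by decide)]

lemma ZP_mem (s : ZMod 2) : ZP s ∈ ({pI, pX, pY, pZ} : Set (Matrix (ZMod 2) (ZMod 2) ℂ)) := by
  simp only [Set.mem_insert_iff, Set.mem_singleton_iff]
  rcases z2_cases s with h | h <;> subst h
  · left; rw [ZP, if_pos rfl]
  · right; right; right; rw [ZP, if_neg (by decide)]

lemma InPauli_one : InPauli n 1 := ⟨1, Subgroup.one_mem _, rfl⟩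

lemma InPauli_mul {P Q : Matrix (W n) (W n) ℂ} (hP : InPauli n P) (hQ : InPauli n Q) :
    InPauli n (P * Q) := by
  obtain ⟨u, hu, rfl⟩ := hP
  obtain ⟨v, hv, rfl⟩ := hQ
  exact ⟨u * v, Subgroup.mul_mem _ hu hv, rfl⟩

lemma InPauli_of_mem {u : (Matrix (W n) (W n) ℂ)ˣ} (hu : u ∈ pauliUnits n) :
    InPauli n (u : Matrix (W n) (W n) ℂ) := ⟨u, Subgroup.subset_closure hu, rfl⟩

noncomputable def shiftU (a : W n) : (Matrix (W n) (W n) ℂ)ˣ :=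
  pUnit (fun k => XP (a k)) (fun k => XP_sq _)
noncomputable def diagU (b : W n) : (Matrix (W n) (W n) ℂ)ˣ :=
  pUnit (fun k => ZP (b k)) (fun k => ZP_sq _)

lemma shiftU_mem (a : W n) : shiftU a ∈ pauliUnits n :=
  ⟨_, fun k => XP_mem (a k), rfl⟩
lemma diagU_mem (b : W n) : diagU b ∈ pauliUnits n :=
  ⟨_, fun k => ZP_mem (b k), rfl⟩

lemma InPauli_WeylM (a b : W n) : InPauli n (WeylM a b) := by
  have := InPauli_mul (InPauli_of_mem (shiftU_mem a)) (InPauli_of_mem (diagU_mem b))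
  exact this

lemma InPauli_I_smul (hn : 0 < n) {P : Matrix (W n) (W n) ℂ} (hP : InPauli n P) :
    InPauli n (Complex.I • P) := by
  obtain ⟨w, hw, rfl⟩ := hP
  set k0 : Fin n := ⟨0, hn⟩
  have hsq : ∀ (R : Matrix (ZMod 2) (ZMod 2) ℂ), R * R = 1 →
      ∀ k : Fin n, (if k = k0 then R else pI) * (if k = k0 then R else pI) = 1 := by
    intro R hR k
    by_cases h : k = k0 <;> simp [h, hR, pI_sq]
  let uX := pUnit (fun k => if k = k0 then pX else pI) (hsq pX pX_sq)
  let uY := pUnit (fun k => if k = k0 then pY else pI) (hsq pY pY_sq)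
  let uZ := pUnit (fun k => if k = k0 then pZ else pI) (hsq pZ pZ_sq)
  have hXmem : uX ∈ pauliUnits n := ⟨_, fun k => by
    by_cases h : k = k0 <;> simp only [h, if_pos, if_neg, if_true, if_false] <;>
      simp [Set.mem_insert_iff], rfl⟩
  have hYmem : uY ∈ pauliUnits n := ⟨_, fun k => by
    by_cases h : k = k0 <;> simp only [h, if_pos, if_neg, if_true, if_false] <;>
      simp [Set.mem_insert_iff], rfl⟩
  have hZmem : uZ ∈ pauliUnits n := ⟨_, fun k => by
    by_cases h : k = k0 <;> simp only [h, if_pos, if_neg, if_true, if_false] <;>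
      simp [Set.mem_insert_iff], rfl⟩
  have hval : ((uX * uY * uZ : (Matrix (W n) (W n) ℂ)ˣ) : Matrix (W n) (W n) ℂ)
      = Complex.I • (1 : Matrix (W n) (W n) ℂ) := by
    rw [Units.val_mul, Units.val_mul, pUnit_val, pUnit_val, pUnit_val,
      tensorP_mul, tensorP_mul]
    have : (fun k => ((if k = k0 then pX else pI) * (if k = k0 then pY else pI)) *
        (if k = k0 then pZ else pI))
        = fun k => (if k = k0 then Complex.I else 1) • (1 : Matrix (ZMod 2) (ZMod 2) ℂ) := by
      funext k
      by_cases h : k = k0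
      · simp only [h, if_pos, if_true]
        rw [Matrix.mul_assoc, pYZ, Matrix.mul_smul, pX_sq]
      · simp only [h, if_false]
        rw [pI, one_mul, one_mul, one_smul]
    rw [this, tensorP_smul, tensorP_one, Finset.prod_ite_eq' Finset.univ k0 fun _ => Complex.I]
    simp
  refine ⟨uX * uY * uZ * w, ?_, ?_⟩
  · exact Subgroup.mul_mem _ (Subgroup.mul_mem _ (Subgroup.mul_mem _
      (Subgroup.subset_closure hXmem) (Subgroup.subset_closure hYmem))
      (Subgroup.subset_closure hZmem)) hw
  · rw [Units.val_mul, hval, Matrix.smul_mul, one_mul]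

lemma InPauli_Ipow_smul (hn : 0 < n) (c : ℕ) {P : Matrix (W n) (W n) ℂ} (hP : InPauli n P) :
    InPauli n ((Complex.I ^ c) • P) := by
  induction c with
  | zero => simpa using hP
  | succ c ih =>
      have : (Complex.I ^ (c+1)) • P = Complex.I • ((Complex.I ^ c) • P) := by
        rw [smul_smul, pow_succ, mul_comm]
      rw [this]
      exact InPauli_I_smul hn ih

lemma gen_decomp {u : (Matrix (W n) (W n) ℂ)ˣ} (hu : u ∈ pauliUnits n) :
    ∃ (c : ℕ) (a b : W n),
      (u : Matrix (W n) (W n) ℂ) = (Complex.I ^ c) • WeylM a b := by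
  obtain ⟨σ, hσ, hval⟩ := hu
  have h1 : ∀ k, ∃ (ck : ℕ) (ak bk : ZMod 2),
      σ k = (Complex.I ^ ck) • (XP ak * ZP bk) := by
    intro k
    have := hσ k
    simp only [Set.mem_insert_iff, Set.mem_singleton_iff] at this
    rcases this with h | h | h | h
    · exact ⟨0, 0, 0, by rw [h, XP, if_pos rfl, ZP, if_pos rfl, pI, one_mul, pow_zero, one_smul]⟩
    · exact ⟨0, 1, 0, by
        rw [h, XP, if_neg (by decide), ZP, if_pos rfl, pI, mul_one, pow_zero, one_smul]⟩
    · exact ⟨1, 1, 1, by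
        rw [h, XP, if_neg (by decide), ZP, if_neg (by decide), pow_one, ← pY_eq]⟩
    · exact ⟨0, 0, 1, by
        rw [h, XP, if_pos rfl, ZP, if_neg (by decide), pI, one_mul, pow_zero, one_smul]⟩
  choose c a b hd using h1
  refine ⟨∑ k, c k, a, b, ?_⟩
  rw [hval]
  rw [show σ = (fun k => (Complex.I ^ c k) • (XP (a k) * ZP (b k))) from funext hd,
    tensorP_smul, ← tensorP_mul, Finset.prod_pow_eq_pow_sum]
  rfl

lemma conj_mem (M : Matrix (W n) (W n) ℂ) (h1 : M * Mᴴ = 1) (h2 : Mᴴ * M = 1)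
    (hgen : ∀ u ∈ pauliUnits n, InPauli n (M * (u : Matrix (W n) (W n) ℂ) * Mᴴ)) :
    ∀ P, InPauli n P → InPauli n (M * P * Mᴴ) := by
  rintro P ⟨u, hu, rfl⟩
  induction hu using Subgroup.closure_induction with
  | mem x hx => exact hgen x hx
  | one =>
      rw [Units.val_one, mul_one, h1]
      exact InPauli_one
  | mul x y hx hy ihx ihy =>
      have key : (M * (↑x : Matrix (W n) (W n) ℂ) * Mᴴ) * (M * (↑y : Matrix (W n) (W n) ℂ) * Mᴴ)
          = M * (↑(x * y) : Matrix (W n) (W n) ℂ) * Mᴴ := by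
        rw [Units.val_mul]
        simp only [Matrix.mul_assoc]
        rw [← Matrix.mul_assoc Mᴴ M ((↑y : Matrix (W n) (W n) ℂ) * Mᴴ), h2, one_mul]
      rw [← key]
      exact InPauli_mul ihx ihy
  | inv x hx ih =>
      obtain ⟨w, hw, hwv⟩ := ih
      refine ⟨w⁻¹, Subgroup.inv_mem _ hw, ?_⟩
      have hxx : (↑x : Matrix (W n) (W n) ℂ) * (↑x⁻¹ : Matrix (W n) (W n) ℂ) = 1 := x.mul_inv
      have key : (↑w : Matrix (W n) (W n) ℂ) *
          (M * (↑x⁻¹ : Matrix (W n) (W n) ℂ) * Mᴴ) = 1 := by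
        rw [hwv]
        simp only [Matrix.mul_assoc]
        rw [← Matrix.mul_assoc Mᴴ M ((↑x⁻¹ : Matrix (W n) (W n) ℂ) * Mᴴ), h2, one_mul,
          ← Matrix.mul_assoc (↑x : Matrix (W n) (W n) ℂ) (↑x⁻¹ : Matrix (W n) (W n) ℂ) Mᴴ,
          hxx, one_mul, h1]
      have h3 := congrArg (fun Z => (↑w⁻¹ : Matrix (W n) (W n) ℂ) * Z) key
      simp only [mul_one, ← Matrix.mul_assoc] at h3
      rw [show (↑w⁻¹ : Matrix (W n) (W n) ℂ) * ↑w = 1 from w.inv_mul, one_mul] at h3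
      exact h3.symm

-- Stage 4 : affine structure
lemma z2_neg (a : ZMod 2) : -a = a := by revert a; decide
lemma z2_ne_add (p q : ZMod 2) (h : p ≠ q) : p + q = 1 := by revert p q; decide
lemma z2_eq_of_add_zero (p q : ZMod 2) (h : p + q = 0) : p = q := by revert p q; decide

lemma vneg_eq {k : ℕ} (v : Fin k → ZMod 2) : -v = v := funext fun i => z2_neg (v i)

lemma vadd_eq_zero_iff {k : ℕ} (u v : Fin k → ZMod 2) : u + v = 0 ↔ u = v := by
  rw [add_eq_zero_iff_eq_neg, vneg_eq]

lemma assemble_add {n : ℕ} (x y x₂ y₂ : W n) :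
    assemble (x + x₂) (y + y₂) = assemble x y + assemble x₂ y₂ := by
  funext i
  show dite _ _ _ = _
  unfold assemble
  by_cases h : (i : ℕ) < n <;> simp only [h, dite_true, dite_false, Pi.add_apply] <;> rfl

lemma assemble_zero {n : ℕ} : assemble (0 : W n) (0 : W n) = 0 := by
  funext i
  unfold assemble
  by_cases h : (i : ℕ) < n <;> simp only [h, dite_true, dite_false] <;> rfl

def EE {n : ℕ} (x y : W n) : Fin (2*n+1) → ZMod 2 := ext (assemble x y)

lemma EE_add {n : ℕ} (x y x₂ y₂ : W n) :
    EE (x + x₂) (y + y₂) = EE x y + EE x₂ y₂ + EE 0 0 := by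
  funext i
  simp only [Pi.add_apply, EE, _root_.ext]
  induction i using Fin.lastCases with
  | last =>
      rw [Fin.snoc_last, Fin.snoc_last, Fin.snoc_last, Fin.snoc_last]
      decide
  | cast j =>
      rw [Fin.snoc_castSucc, Fin.snoc_castSucc, Fin.snoc_castSucc, Fin.snoc_castSucc,
        assemble_add, assemble_zero, Pi.add_apply, Pi.zero_apply, add_zero]

section Affine
variable {n m t : ℕ}

def sF (α : Fin t → Fin (2*n+1) → ZMod 2) (j : Fin t) (x y : W n) : ZMod 2 :=
  ∑ i, α j i * EE x y i
def tF (α : Fin t → Fin (2*n+1) → ZMod 2) (j : Fin t) (x y : W n) : ZMod 2 :=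
  sF α j x y + sF α j 0 0
noncomputable def QF (α : Fin t → Fin (2*n+1) → ZMod 2) (x y : W n) : ZMod 4 :=
  ∑ j, (((sF α j x y).val : ℕ) : ZMod 4)
noncomputable def TF (α : Fin t → Fin (2*n+1) → ZMod 2) (w v : W n) : ZMod 4 :=
  ∑ j, (((tF α j w v).val : ℕ) : ZMod 4)
def BF (α : Fin t → Fin (2*n+1) → ZMod 2) (x y w v : W n) : ZMod 2 :=
  ∑ j, sF α j x y * tF α j w v
def CF (α : Fin t → Fin (2*n+1) → ZMod 2) (w v y : W n) : ZMod 2 :=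
  ∑ j, tF α j 0 y * tF α j w v
noncomputable def chiF (A : Matrix (Fin m) (Fin (2*n+1)) (ZMod 2)) (x y : W n) : ℂ :=
  if A.mulVec (EE x y) = 0 then 1 else 0
noncomputable def ddF (A : Matrix (Fin m) (Fin (2*n+1)) (ZMod 2)) (w v : W n) : ℂ :=
  if A.mulVec (EE w v + EE 0 0) = 0 then 1 else 0
def psiF (A : Matrix (Fin m) (Fin (2*n+1)) (ZMod 2)) (y : W n) : Fin m → ZMod 2 :=
  A.mulVec (EE 0 y + EE 0 0)

variable (α : Fin t → Fin (2*n+1) → ZMod 2) (A : Matrix (Fin m) (Fin (2*n+1)) (ZMod 2))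

lemma sF_add (j : Fin t) (x y x₂ y₂ : W n) :
    sF α j (x + x₂) (y + y₂) = sF α j x y + sF α j x₂ y₂ + sF α j 0 0 := by
  unfold sF
  rw [EE_add]
  rw [← Finset.sum_add_distrib, ← Finset.sum_add_distrib]
  apply Finset.sum_congr rfl
  intro i _
  rw [Pi.add_apply, Pi.add_apply, mul_add, mul_add]

lemma sF_decomp (j : Fin t) (x y x₂ y₂ : W n) :
    sF α j (x + x₂) (y + y₂) = sF α j x y + tF α j x₂ y₂ := by
  rw [sF_add, tF]; ring

lemma tF_add (j : Fin t) (x y x₂ y₂ : W n) :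
    tF α j (x + x₂) (y + y₂) = tF α j x y + tF α j x₂ y₂ := by
  unfold tF
  rw [sF_decomp, tF]
  ring

lemma val4 : ∀ p q : ZMod 2,
    (((p + q).val : ℕ) : ZMod 4) = ((p.val : ℕ) : ZMod 4) + ((q.val : ℕ) : ZMod 4)
      + 2 * (((p * q).val : ℕ) : ZMod 4) := by decide

lemma key2 : ∀ p q : ZMod 2,
    2 * (((p + q).val : ℕ) : ZMod 4) = 2 * ((p.val : ℕ) : ZMod 4) + 2 * ((q.val : ℕ) : ZMod 4) := by
  decide

lemma sum2 {ι : Type*} (s : Finset ι) (g : ι → ZMod 2) :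
    (∑ j ∈ s, 2 * (((g j).val : ℕ) : ZMod 4)) = 2 * ((((∑ j ∈ s, g j).val : ℕ)) : ZMod 4) := by
  classical
  induction s using Finset.cons_induction with
  | empty => simp
  | cons a s ha ih => rw [Finset.sum_cons, Finset.sum_cons, ih, key2]

lemma QF_coc (x y x₂ y₂ : W n) :
    QF α (x + x₂) (y + y₂) = QF α x y + TF α x₂ y₂
      + 2 * (((BF α x y x₂ y₂).val : ℕ) : ZMod 4) := by
  unfold QF TF BF
  rw [← sum2]
  rw [← Finset.sum_add_distrib, ← Finset.sum_add_distrib]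
  apply Finset.sum_congr rfl
  intro j _
  rw [sF_decomp, val4]

lemma conj_chi (x y : W n) : (starRingEnd ℂ) (chiF A x y) = chiF A x y := by
  unfold chiF
  split <;> simp

lemma chi_sq (x y : W n) : chiF A x y * chiF A x y = chiF A x y := by
  unfold chiF; split <;> simp

lemma chi_split (w v x' y : W n) :
    chiF A (x' + w) (y + v) = ddF A w v * chiF A x' y
      + (1 - chiF A x' y) * chiF A (x' + w) (y + v) := by
  unfold chiF ddF
  have hE : A.mulVec (EE (x' + w) (y + v)) = A.mulVec (EE x' y) + A.mulVec (EE w v + EE 0 0) := by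
    rw [EE_add, ← Matrix.mulVec_add, add_assoc]
  by_cases hc : A.mulVec (EE x' y) = 0
  · rw [if_pos hc]
    by_cases hd : A.mulVec (EE w v + EE 0 0) = 0
    · rw [if_pos hd, if_pos (by rw [hE, hc, hd, add_zero])]
      ring
    · rw [if_neg hd, if_neg (by rw [hE, hc, zero_add]; exact hd)]
      ring
  · rw [if_neg hc]
    ring

lemma psiF_add (y y₂ : W n) : psiF A (y + y₂) = psiF A y + psiF A y₂ := by
  unfold psiF
  rw [← Matrix.mulVec_add]
  congr 1
  have h := EE_add (0 : W n) y 0 y₂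
  rw [show (0 : W n) + 0 = (0 : W n) from add_zero 0] at h
  rw [h]
  abel

lemma chi_psi (x y : W n) :
    chiF A x y = if psiF A y = A.mulVec (EE x 0) then 1 else 0 := by
  unfold chiF psiF
  have hE : A.mulVec (EE x y) = A.mulVec (EE 0 y + EE 0 0) + A.mulVec (EE x 0) := by
    rw [← Matrix.mulVec_add]
    congr 1
    have h := EE_add x (0 : W n) 0 y
    rw [add_zero, zero_add] at h
    rw [h]
    abel
  rw [hE]
  congr 1
  rw [eq_iff_iff]
  constructor
  · intro h
    have := (vadd_eq_zero_iff (A.mulVec (EE 0 y + EE 0 0)) (A.mulVec (EE x 0))).mp h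
    exact this
  · intro h
    rw [h, vadd_self]

end Affine

section Dich
variable {n m : ℕ}

lemma dich_zero (ψ : W n → (Fin m → ZMod 2)) (hψ : ∀ u v, ψ (u + v) = ψ u + ψ v)
    (g : W n → ZMod 2) (hg : ∀ u v, g (u + v) = g u + g v) (r : Fin m → ZMod 2)
    (y₁ y₂ : W n) (h1 : ψ y₁ = r) (h2 : ψ y₂ = r) (hne : g y₁ ≠ g y₂) :
    ∑ y, (if ψ y = r then (1:ℂ) else 0) * m1 (g y) = 0 := by
  set k := y₁ + y₂ with hk
  have hψk : ψ k = 0 := by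
    rw [hk, hψ, h1, h2]
    funext i
    exact z2_add_self (r i)
  have hgk : g k = 1 := by
    rw [hk, hg]
    exact z2_ne_add _ _ hne
  have hre : ∑ y, (if ψ y = r then (1:ℂ) else 0) * m1 (g y)
      = ∑ y, (if ψ (y + k) = r then (1:ℂ) else 0) * m1 (g (y + k)) :=
    Fintype.sum_equiv (Equiv.addRight k)
      (fun y => (if ψ (y + k) = r then (1:ℂ) else 0) * m1 (g (y + k)))
      (fun y => (if ψ y = r then (1:ℂ) else 0) * m1 (g y)) (fun y => rfl) |>.symm
  have hpt : ∀ y : W n, (if ψ (y + k) = r then (1:ℂ) else 0) * m1 (g (y + k))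
      = -((if ψ y = r then (1:ℂ) else 0) * m1 (g y)) := by
    intro y
    rw [hψ, hψk, add_zero, hg, hgk, m1_add, m1_one]
    ring
  rw [Finset.sum_congr rfl (fun y _ => hpt y), Finset.sum_neg_distrib] at hre
  have h2S : (2:ℂ) * ∑ y, (if ψ y = r then (1:ℂ) else 0) * m1 (g y) = 0 := by
    linear_combination hre
  exact (mul_eq_zero.mp h2S).resolve_left two_ne_zero

lemma dich_const (ψ : W n → (Fin m → ZMod 2)) (g : W n → ZMod 2) (r : Fin m → ZMod 2)
    (hc : ∀ y₁ y₂, ψ y₁ = r → ψ y₂ = r → g y₁ = g y₂) (y₀ : W n) (h0 : ψ y₀ = r) :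
    ∑ y, (if ψ y = r then (1:ℂ) else 0) * m1 (g y)
      = m1 (g y₀) * ∑ y, (if ψ y = r then (1:ℂ) else 0) := by
  rw [Finset.mul_sum]
  apply Finset.sum_congr rfl
  intro y _
  by_cases h : ψ y = r
  · rw [if_pos h, hc y y₀ h h0, one_mul, mul_one]
  · rw [if_neg h, zero_mul, mul_zero]

end Dich

section AddRep
variable {n : ℕ}

def unitv (k : Fin n) : W n := fun i => if i = k then 1 else 0

lemma theta_zero (θ : W n → ZMod 2) (hθ : ∀ u v, θ (u + v) = θ u + θ v) : θ 0 = 0 := by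
  have h2 := hθ 0 0
  rw [add_zero] at h2
  rcases z2_cases (θ 0) with h | h
  · exact h
  · rw [h] at h2
    exact absurd h2 (by decide)

lemma theta_finsum (θ : W n → ZMod 2) (hθ : ∀ u v, θ (u + v) = θ u + θ v)
    {ι : Type*} (s : Finset ι) (v : ι → W n) :
    θ (∑ i ∈ s, v i) = ∑ i ∈ s, θ (v i) := by
  classical
  induction s using Finset.cons_induction with
  | empty => simpa using theta_zero θ hθ
  | cons a s ha ih => rw [Finset.sum_cons, Finset.sum_cons, hθ, ih]

lemma additive_rep (θ : W n → ZMod 2) (hθ : ∀ u v, θ (u + v) = θ u + θ v) (x : W n) :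
    θ x = bv (fun k => θ (unitv k)) x := by
  have hx : x = ∑ k, (fun i => if i = k then x k else 0 : W n) := by
    funext i
    rw [Finset.sum_apply]
    have hb : ∀ k : Fin n, ((fun i => if i = k then x k else 0 : W n) i)
        = if i = k then x k else 0 := fun k => rfl
    rw [Finset.sum_congr rfl (fun k _ => hb k),
      Finset.sum_ite_eq Finset.univ i (fun k => x k), if_pos (Finset.mem_univ i)]
  conv_lhs => rw [hx]
  rw [theta_finsum θ hθ]
  unfold bv
  apply Finset.sum_congr rfl
  intro k _
  rcases z2_cases (x k) with h | h
  · rw [show (fun i => if i = k then x k else 0 : W n) = 0 from by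
      funext i; rw [h]; simp, theta_zero θ hθ, h]
    ring
  · rw [show (fun i => if i = k then x k else 0 : W n) = unitv k from by
      funext i; rw [h]; rfl, h]
    ring

end AddRep

-- Stage 5 : the master sum formula
section Core
variable {n m t : ℕ} (A : Matrix (Fin m) (Fin (2*n+1)) (ZMod 2))
  (α : Fin t → Fin (2*n+1) → ZMod 2)

lemma chi_split' (w v x' y : W n) :
    chiF A (x' + w) (y + v) * chiF A x' y = ddF A w v * chiF A x' y := by
  unfold chiF ddF
  have hE : A.mulVec (EE (x' + w) (y + v)) = A.mulVec (EE x' y) + A.mulVec (EE w v + EE 0 0) := by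
    rw [EE_add, ← Matrix.mulVec_add, add_assoc]
  by_cases hc : A.mulVec (EE x' y) = 0
  · rw [if_pos hc]
    by_cases hd : A.mulVec (EE w v + EE 0 0) = 0
    · rw [if_pos hd, if_pos (by rw [hE, hc, hd, add_zero])]
    · rw [if_neg hd, if_neg (by rw [hE, hc, zero_add]; exact hd)]
  · rw [if_neg hc, mul_zero, mul_zero]

lemma xw_id (x x' : W n) : x = x' + (x + x') := by
  funext i
  show x i = x' i + (x i + x' i)
  rw [show x' i + (x i + x' i) = x i + (x' i + x' i) from by ring, z2_add_self, add_zero]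

lemma BF_split (x' y w v : W n) :
    BF α x' y w v = BF α x' 0 w v + CF α w v y := by
  unfold BF CF
  rw [← Finset.sum_add_distrib]
  apply Finset.sum_congr rfl
  intro j _
  have h := sF_decomp α j x' 0 0 y
  rw [add_zero, zero_add] at h
  rw [h, add_mul]

variable (lam : ℂ) (M : Matrix (W n) (W n) ℂ)

lemma MW_apply (a b : W n)
    (hM : ∀ x y, M x y = lam * chiF A x y * zeta (QF α x y)) (x y' : W n) :
    (M * WeylM a b) x y' = M x (y' + a) * m1 (bv b y') := by
  rw [Matrix.mul_apply]
  have hpt : ∀ y : W n, M x y * WeylM a b y y'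
      = if y = y' + a then M x y * m1 (bv b y') else 0 := by
    intro y
    rw [WeylM_apply]
    by_cases h : y = y' + a
    · rw [if_pos h, if_pos (by
        subst h
        funext i
        show y' i = y' i + a i + a i
        rw [add_assoc, z2_add_self, add_zero])]
    · rw [if_neg (fun hc => h (by
        subst hc
        funext i
        show y i = y i + a i + a i
        rw [add_assoc, z2_add_self, add_zero])), if_neg h, mul_zero]
  rw [Finset.sum_congr rfl (fun y _ => hpt y),
    Finset.sum_ite_eq' Finset.univ (y' + a) (fun y => M x y * m1 (bv b y')),
    if_pos (Finset.mem_univ _)]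

lemma sum_form (a b : W n)
    (hM : ∀ x y, M x y = lam * chiF A x y * zeta (QF α x y)) (x x' : W n) :
    (M * WeylM a b * Mᴴ) x x' =
      (lam * (starRingEnd ℂ) lam) * ddF A (x + x') a * zeta (TF α (x + x') a)
        * m1 (BF α x' 0 (x + x') a)
        * ∑ y, chiF A x' y * m1 (bv b y + CF α (x + x') a y) := by
  rw [Matrix.mul_apply]
  have hpt : ∀ y : W n,
      (M * WeylM a b) x y * (Mᴴ) y x'
      = ((lam * (starRingEnd ℂ) lam) * ddF A (x + x') a * zeta (TF α (x + x') a)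
          * m1 (BF α x' 0 (x + x') a)) * (chiF A x' y * m1 (bv b y + CF α (x + x') a y)) := by
    intro y
    rw [MW_apply A α lam M a b hM x y, Matrix.conjTranspose_apply, hM x (y + a), hM x' y,
      Complex.star_def, _root_.map_mul, _root_.map_mul, conj_chi, conj_zeta]
    have hQ : QF α x (y + a) = QF α x' y + TF α (x + x') a
        + 2 * (((BF α x' y (x + x') a).val : ℕ) : ZMod 4) := by
      conv_lhs => rw [xw_id x x']
      exact QF_coc α x' y (x + x') a
    have hchi : chiF A x (y + a) * chiF A x' y = ddF A (x + x') a * chiF A x' y := by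
      conv_lhs => rw [xw_id x x']
      exact chi_split' A (x + x') a x' y
    rw [hQ, zeta_add, zeta_add, zeta_two_mul, BF_split, m1_add, m1_add]
    calc lam * chiF A x (y + a) *
          (zeta (QF α x' y) * zeta (TF α (x + x') a) *
            (m1 (BF α x' 0 (x + x') a) * m1 (CF α (x + x') a y))) *
          m1 (bv b y) *
          ((starRingEnd ℂ) lam * chiF A x' y * zeta (-QF α x' y))
        = (lam * (starRingEnd ℂ) lam) * (chiF A x (y + a) * chiF A x' y)
            * (zeta (QF α x' y) * zeta (-QF α x' y)) * zeta (TF α (x + x') a)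
            * m1 (BF α x' 0 (x + x') a) * m1 (CF α (x + x') a y) * m1 (bv b y) := by
          ring
      _ = (lam * (starRingEnd ℂ) lam) * (ddF A (x + x') a * chiF A x' y)
            * 1 * zeta (TF α (x + x') a)
            * m1 (BF α x' 0 (x + x') a) * m1 (CF α (x + x') a y) * m1 (bv b y) := by
          rw [hchi, zeta_cancel]
      _ = (lam * (starRingEnd ℂ) lam) * ddF A (x + x') a * zeta (TF α (x + x') a)
            * m1 (BF α x' 0 (x + x') a) * (chiF A x' y * (m1 (bv b y) * m1 (CF α (x + x') a y))) := by
          ring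
  rw [Finset.sum_congr rfl (fun y _ => hpt y), ← Finset.mul_sum]

end Core

-- Stage 6 : core lemma
lemma WeylM_zero {n : ℕ} : WeylM (0 : W n) 0 = 1 := by
  have h1 : shiftM (0 : W n) = 1 := by
    unfold shiftM
    have he : (fun k : Fin n => XP ((0 : W n) k))
        = (fun _ : Fin n => (1 : Matrix (ZMod 2) (ZMod 2) ℂ)) := by
      funext k
      show XP 0 = 1
      rw [XP, if_pos rfl, pI]
    rw [he]
    exact tensorP_one n
  have h2 : diagM (0 : W n) = 1 := by
    unfold diagM
    have he : (fun k : Fin n => ZP ((0 : W n) k))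
        = (fun _ : Fin n => (1 : Matrix (ZMod 2) (ZMod 2) ℂ)) := by
      funext k
      show ZP 0 = 1
      rw [ZP, if_pos rfl, pI]
    rw [he]
    exact tensorP_one n
  rw [WeylM, h1, h2, one_mul]

lemma WeylM_unitary {n : ℕ} (a b : W n) : WeylM a b * (WeylM a b)ᴴ = 1 := by
  funext x x'
  rw [Matrix.mul_apply]
  have hpt : ∀ y : W n, WeylM a b x y * (WeylM a b)ᴴ y x'
      = if y = x + a then (if y = x' + a then (1:ℂ) else 0) else 0 := by
    intro y
    rw [Matrix.conjTranspose_apply, WeylM_apply, WeylM_apply, Complex.star_def]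
    by_cases h1 : y = x + a
    · rw [if_pos h1, if_pos h1]
      by_cases h2 : y = x' + a
      · rw [if_pos h2, if_pos h2, conj_m1, m1_mul_self]
      · rw [if_neg h2, if_neg h2, map_zero, mul_zero]
    · rw [if_neg h1, if_neg h1, zero_mul]
  rw [Finset.sum_congr rfl (fun y _ => hpt y),
    Finset.sum_ite_eq' Finset.univ (x + a) (fun y => if y = x' + a then (1:ℂ) else 0),
    if_pos (Finset.mem_univ _), Matrix.one_apply]
  by_cases h : x = x'
  · rw [if_pos (by rw [h]), if_pos h]
  · rw [if_neg (fun hc => h (add_right_cancel hc)), if_neg h]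

section Core2
variable {n m t : ℕ} (A : Matrix (Fin m) (Fin (2*n+1)) (ZMod 2))
  (α : Fin t → Fin (2*n+1) → ZMod 2)

lemma tF00 (j : Fin t) : tF α j 0 0 = 0 := z2_add_self _
lemma TF00 : TF α (0 : W n) 0 = 0 := by
  unfold TF; simp [tF00]
lemma CF00 (y : W n) : CF α (0 : W n) 0 y = 0 := by
  unfold CF; simp [tF00]
lemma BF00 (x' : W n) : BF α x' 0 (0 : W n) 0 = 0 := by
  unfold BF; simp [tF00]
lemma bv_zero {k : ℕ} (y : W k) : bv 0 y = 0 := by unfold bv; simp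
lemma bv_add {k : ℕ} (b y y₂ : W k) : bv b (y + y₂) = bv b y + bv b y₂ := by
  unfold bv
  rw [← Finset.sum_add_distrib]
  exact Finset.sum_congr rfl fun i _ => by rw [Pi.add_apply, mul_add]
lemma ddF00 : ddF A (0 : W n) 0 = 1 := by
  unfold ddF
  rw [if_pos (by rw [vadd_self, Matrix.mulVec_zero])]

lemma CF_addy (w v y y₂ : W n) : CF α w v (y + y₂) = CF α w v y + CF α w v y₂ := by
  unfold CF
  rw [← Finset.sum_add_distrib]
  apply Finset.sum_congr rfl
  intro j _
  have h := tF_add α j 0 y 0 y₂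
  rw [add_zero] at h
  rw [h, add_mul]

lemma rr_add (x₁ x₂ : W n) :
    A.mulVec (EE (x₁ + x₂) 0) = A.mulVec (EE x₁ 0) + A.mulVec (EE x₂ 0) + A.mulVec (EE 0 0) := by
  have h := EE_add x₁ (0 : W n) x₂ 0
  rw [add_zero] at h
  rw [h, Matrix.mulVec_add, Matrix.mulVec_add]

lemma theta1_add (a' v : W n) (x₁ x₂ : W n) :
    (∑ j, tF α j (x₁ + x₂) 0 * tF α j a' v)
      = (∑ j, tF α j x₁ 0 * tF α j a' v) + (∑ j, tF α j x₂ 0 * tF α j a' v) := by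
  rw [← Finset.sum_add_distrib]
  apply Finset.sum_congr rfl
  intro j _
  have h := tF_add α j x₁ 0 x₂ 0
  rw [add_zero] at h
  rw [h, add_mul]

lemma BF_theta (a' v x : W n) :
    BF α (x + a') 0 a' v
      = (∑ j, tF α j x 0 * tF α j a' v) + (∑ j, (sF α j 0 0 + tF α j a' 0) * tF α j a' v) := by
  unfold BF
  rw [← Finset.sum_add_distrib]
  apply Finset.sum_congr rfl
  intro j _
  have h1 := sF_decomp α j x 0 a' 0
  rw [add_zero] at h1
  have h2 := sF_decomp α j 0 0 x 0
  rw [add_zero, zero_add] at h2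
  rw [h1, h2, add_mul, add_mul, add_mul]
  ring

variable (lam : ℂ) (M : Matrix (W n) (W n) ℂ)

lemma MMH_apply (hM : ∀ x y, M x y = lam * chiF A x y * zeta (QF α x y)) (x x' : W n) :
    (M * Mᴴ) x x' =
      (lam * (starRingEnd ℂ) lam) * ddF A (x + x') 0 * zeta (TF α (x + x') 0)
        * m1 (BF α x' 0 (x + x') 0)
        * ∑ y, chiF A x' y * m1 (CF α (x + x') 0 y) := by
  have h := sum_form A α lam M 0 0 hM x x'
  rw [WeylM_zero, mul_one] at h
  rw [h]
  congr 1
  apply Finset.sum_congr rfl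
  intro y _
  rw [bv_zero, zero_add]

lemma MMH_diag (hM : ∀ x y, M x y = lam * chiF A x y * zeta (QF α x y)) (x : W n) :
    (M * Mᴴ) x x = (lam * (starRingEnd ℂ) lam) * ∑ y, chiF A x y := by
  rw [MMH_apply A α lam M hM x x, vadd_self, ddF00, TF00, BF00, zeta_zero, m1_zero,
    mul_one, mul_one, mul_one]
  congr 1
  apply Finset.sum_congr rfl
  intro y _
  rw [CF00, m1_zero, mul_one]

lemma z2_add_ne (p q : ZMod 2) (h : q ≠ 0) : p + q ≠ p := by revert p q; decide

lemma m1_two : m1 2 = 1 := by rw [show (2 : ZMod 2) = 0 from by decide, m1_zero]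
lemma m1_three : m1 3 = -1 := by rw [show (3 : ZMod 2) = 1 from by decide, m1_one]
lemma m1_four : m1 4 = 1 := by rw [show (4 : ZMod 2) = 0 from by decide, m1_zero]

lemma m1_helper (p q r s u v : ZMod 2) :
    m1 (p + q) * m1 (r + s + u) = m1 q * m1 s * m1 v * m1 (p + (r + u) + v) := by
  rcases z2_cases p with hp | hp <;> rcases z2_cases q with hq | hq <;>
    rcases z2_cases r with hr | hr <;> rcases z2_cases s with hs | hs <;>
    rcases z2_cases u with hu | hu <;> rcases z2_cases v with hv | hv <;>
    subst hp <;> subst hq <;> subst hr <;> subst hs <;> subst hu <;> subst hv <;>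
    norm_num [m1_zero, m1_one, m1_two, m1_three, m1_four]

lemma core (hM : ∀ x y, M x y = lam * chiF A x y * zeta (QF α x y))
    (h1 : M * Mᴴ = 1) (h2 : Mᴴ * M = 1) (a b : W n) :
    ∃ (e : ℕ) (a' b' : W n),
      M * WeylM a b * Mᴴ = (Complex.I ^ e) • WeylM a' b' := by
  classical
  -- row sums are 1
  have hrow : ∀ x', (lam * (starRingEnd ℂ) lam) * ∑ y, chiF A x' y = 1 := by
    intro x'
    rw [← MMH_diag A α lam M hM x', h1, Matrix.one_apply_eq]
  -- fibers are nonempty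
  have hfib : ∀ x', ∃ y₀, psiF A y₀ = A.mulVec (EE x' 0) := by
    intro x'
    by_contra hc
    push_neg at hc
    have hz : ∀ y, chiF A x' y = 0 := by
      intro y
      rw [chi_psi, if_neg (hc y)]
    have := hrow x'
    rw [Finset.sum_congr rfl (fun y _ => hz y), Finset.sum_const_zero, mul_zero] at this
    exact absurd this (by norm_num)
  set y₀ : W n → W n := fun x' => Classical.choose (hfib x') with hy₀def
  have hy₀ : ∀ x', psiF A (y₀ x') = A.mulVec (EE x' 0) := fun x' =>
    Classical.choose_spec (hfib x')
  -- the y-character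
  set g : W n → W n → ZMod 2 := fun w y => bv b y + CF α w a y with hgdef
  have hg_add : ∀ w y y₂, g w (y + y₂) = g w y + g w y₂ := by
    intro w y y₂
    show bv b (y + y₂) + CF α w a (y + y₂) = _
    rw [bv_add, CF_addy]
    ring
  -- the Good predicate
  set Good : W n → Prop :=
    fun w => A.mulVec (EE w a + EE 0 0) = 0 ∧ ∀ k, psiF A k = 0 → g w k = 0 with hGood
  -- phase
  set Ph : W n → W n → ℂ :=
    fun w x' => zeta (TF α w a) * m1 (BF α x' 0 w a) * m1 (g w (y₀ x')) with hPh
  -- entry values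
  have hNval : ∀ x x', (M * WeylM a b * Mᴴ) x x'
      = if Good (x + x') then Ph (x + x') x' else 0 := by
    intro x x'
    rw [sum_form A α lam M a b hM x x']
    have hsum : (∑ y, chiF A x' y * m1 (bv b y + CF α (x + x') a y))
        = ∑ y, (if psiF A y = A.mulVec (EE x' 0) then (1:ℂ) else 0) * m1 (g (x + x') y) := by
      apply Finset.sum_congr rfl
      intro y _
      rw [chi_psi]
    by_cases hdd : A.mulVec (EE (x + x') a + EE 0 0) = 0
    · by_cases hconst : ∀ k, psiF A k = 0 → g (x + x') k = 0
      · rw [if_pos ⟨hdd, hconst⟩]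
        have hcc : ∀ y₁ y₂, psiF A y₁ = A.mulVec (EE x' 0) → psiF A y₂ = A.mulVec (EE x' 0) →
            g (x + x') y₁ = g (x + x') y₂ := by
          intro y₁ y₂ hp1 hp2
          apply z2_eq_of_add_zero
          rw [← hg_add]
          apply hconst
          rw [psiF_add, hp1, hp2, vadd_self]
        rw [hsum, dich_const (psiF A) (g (x + x')) _ hcc (y₀ x') (hy₀ x')]
        have hback : (∑ y, if psiF A y = A.mulVec (EE x' 0) then (1:ℂ) else 0)
            = ∑ y, chiF A x' y := by
          apply Finset.sum_congr rfl
          intro y _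
          rw [chi_psi]
        rw [hback]
        have hd1 : ddF A (x + x') a = 1 := by rw [ddF, if_pos hdd]
        rw [hd1]
        calc lam * (starRingEnd ℂ) lam * 1 * zeta (TF α (x + x') a) * m1 (BF α x' 0 (x + x') a)
            * (m1 (g (x + x') (y₀ x')) * ∑ y, chiF A x' y)
            = (zeta (TF α (x + x') a) * m1 (BF α x' 0 (x + x') a) * m1 (g (x + x') (y₀ x')))
              * (lam * (starRingEnd ℂ) lam * ∑ y, chiF A x' y) := by ring
          _ = Ph (x + x') x' := by rw [hrow x', mul_one]
      · rw [if_neg (fun hG => hconst hG.2)]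
        push_neg at hconst
        obtain ⟨k, hk0, hkne⟩ := hconst
        have hzero : (∑ y, (if psiF A y = A.mulVec (EE x' 0) then (1:ℂ) else 0)
            * m1 (g (x + x') y)) = 0 := by
          apply dich_zero (psiF A) (psiF_add A) (g (x + x')) (hg_add (x + x'))
            (A.mulVec (EE x' 0)) (y₀ x') (y₀ x' + k) (hy₀ x')
          · rw [psiF_add, hy₀ x', hk0, add_zero]
          · rw [hg_add]
            intro hc
            exact z2_add_ne (g (x + x') (y₀ x')) (g (x + x') k) hkne hc.symm
        rw [hsum, hzero, mul_zero]
    · rw [if_neg (fun hG => hdd hG.1)]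
      have hd0 : ddF A (x + x') a = 0 := by rw [ddF, if_neg hdd]
      rw [hd0]
      ring
  -- phases are unimodular
  have hPhU : ∀ w x', Ph w x' * (starRingEnd ℂ) (Ph w x') = 1 := by
    intro w x'
    rw [hPh]
    simp only
    rw [_root_.map_mul, _root_.map_mul, conj_zeta, conj_m1, conj_m1]
    calc zeta (TF α w a) * m1 (BF α x' 0 w a) * m1 (g w (y₀ x')) *
          (zeta (-TF α w a) * m1 (BF α x' 0 w a) * m1 (g w (y₀ x')))
        = (zeta (TF α w a) * zeta (-TF α w a)) * (m1 (BF α x' 0 w a) * m1 (BF α x' 0 w a))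
          * (m1 (g w (y₀ x')) * m1 (g w (y₀ x'))) := by ring
      _ = 1 := by rw [zeta_cancel, m1_mul_self, m1_mul_self, one_mul, one_mul]
  -- N is unitary
  have hNU : (M * WeylM a b * Mᴴ) * (M * WeylM a b * Mᴴ)ᴴ = 1 := by
    rw [Matrix.conjTranspose_mul, Matrix.conjTranspose_mul, Matrix.conjTranspose_conjTranspose]
    simp only [Matrix.mul_assoc]
    rw [← Matrix.mul_assoc Mᴴ M ((WeylM a b)ᴴ * Mᴴ), h2, one_mul,
      ← Matrix.mul_assoc (WeylM a b) (WeylM a b)ᴴ Mᴴ, WeylM_unitary, one_mul, h1]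
  -- uniqueness of the good difference
  have hcard : ∃! a', Good a' := by
    have hent := congrFun (congrFun hNU 0) 0
    rw [Matrix.mul_apply, Matrix.one_apply_eq] at hent
    have hpt : ∀ x', (M * WeylM a b * Mᴴ) 0 x' * ((M * WeylM a b * Mᴴ)ᴴ) x' 0
        = if Good x' then (1:ℂ) else 0 := by
      intro x'
      rw [Matrix.conjTranspose_apply, Complex.star_def, hNval 0 x', zero_add]
      by_cases h : Good x'
      · rw [if_pos h, if_pos h, hPhU]
      · rw [if_neg h, if_neg h, map_zero, mul_zero]
    rw [Finset.sum_congr rfl (fun x' _ => hpt x'), Finset.sum_boole] at hent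
    have hone : (Finset.filter Good Finset.univ).card = 1 := by
      exact_mod_cast hent
    obtain ⟨a', ha'⟩ := Finset.card_eq_one.mp hone
    refine ⟨a', ?_, ?_⟩
    · have : a' ∈ Finset.filter Good Finset.univ := by rw [ha']; exact Finset.mem_singleton_self a'
      exact (Finset.mem_filter.mp this).2
    · intro w hw
      have : w ∈ Finset.filter Good Finset.univ := Finset.mem_filter.mpr ⟨Finset.mem_univ w, hw⟩
      rw [ha'] at this
      exact Finset.mem_singleton.mp this
  obtain ⟨a', hGa', huniq⟩ := hcard
  -- condition rewriting
  have hcond : ∀ x x' : W n, Good (x + x') ↔ x' = x + a' := by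
    intro x x'
    constructor
    · intro h
      have h3 := huniq _ h
      have hx' : x' = x + (x + x') := by
        funext i
        show x' i = x i + (x i + x' i)
        rw [← add_assoc, z2_add_self, zero_add]
      rw [hx', h3]
    · rintro rfl
      have : x + (x + a') = a' := by
        funext i
        show x i + (x i + a' i) = a' i
        rw [← add_assoc, z2_add_self, zero_add]
      rw [this]
      exact hGa'
  -- the affine phase function Ψ
  set Psi : W n → ZMod 2 := fun x' => g a' (y₀ x') with hPsidef
  have hPsi : ∀ x₁ x₂, Psi (x₁ + x₂) = Psi x₁ + Psi x₂ + Psi 0 := by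
    intro x₁ x₂
    have hp : psiF A (y₀ x₁ + y₀ x₂ + y₀ 0) = A.mulVec (EE (x₁ + x₂) 0) := by
      rw [psiF_add, psiF_add, hy₀, hy₀, hy₀, rr_add]
    have hconst : ∀ y₁ y₂, psiF A y₁ = A.mulVec (EE (x₁ + x₂) 0) →
        psiF A y₂ = A.mulVec (EE (x₁ + x₂) 0) → g a' y₁ = g a' y₂ := by
      intro y₁ y₂ hp1 hp2
      apply z2_eq_of_add_zero
      rw [← hg_add]
      apply hGa'.2
      rw [psiF_add, hp1, hp2, vadd_self]
    have := hconst (y₀ (x₁ + x₂)) (y₀ x₁ + y₀ x₂ + y₀ 0) (hy₀ _) hp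
    rw [hPsidef]
    simp only
    rw [this, hg_add, hg_add]
  -- the additive part
  set th : W n → ZMod 2 :=
    fun x => (∑ j, tF α j x 0 * tF α j a' a) + (Psi x + Psi 0) with hthdef
  have hth_add : ∀ x₁ x₂, th (x₁ + x₂) = th x₁ + th x₂ := by
    intro x₁ x₂
    rw [hthdef]
    simp only
    rw [theta1_add, hPsi x₁ x₂]
    ring
  set b' : W n := fun k => th (unitv k) with hb'def
  have hrep : ∀ x, th x = bv b' x := fun x => additive_rep th hth_add x
  refine ⟨(TF α a' a).val + 2 * (∑ j, (sF α j 0 0 + tF α j a' 0) * tF α j a' a).val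
      + 2 * (Psi a').val + 2 * (bv b' a').val, a', b', ?_⟩
  funext x x'
  rw [hNval x x', Matrix.smul_apply, WeylM_apply, smul_eq_mul]
  by_cases hc : x' = x + a'
  · subst hc
    rw [if_pos ((hcond x (x + a')).mpr rfl), if_pos rfl]
    have hxa : x + (x + a') = a' := by
      funext i
      show x i + (x i + a' i) = a' i
      rw [← add_assoc, z2_add_self, zero_add]
    rw [hxa, hPh]
    simp only
    rw [BF_theta α a' a x,
      show g a' (y₀ (x + a')) = Psi (x + a') from rfl, hPsi x a',
      bv_add b' x a', show bv b' x = th x from (hrep x).symm,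
      show th x = (∑ j, tF α j x 0 * tF α j a' a) + (Psi x + Psi 0) from rfl]
    have hIe : (Complex.I : ℂ) ^ ((TF α a' a).val
          + 2 * (∑ j, (sF α j 0 0 + tF α j a' 0) * tF α j a' a).val
          + 2 * (Psi a').val + 2 * (bv b' a').val)
        = zeta (TF α a' a) * m1 (∑ j, (sF α j 0 0 + tF α j a' 0) * tF α j a' a)
            * m1 (Psi a') * m1 (bv b' a') := by
      rw [pow_add, pow_add, pow_add, ← m1_eq_I_pow, ← m1_eq_I_pow, ← m1_eq_I_pow]
      rfl
    rw [hIe]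
    linear_combination zeta (TF α a' a) * m1_helper (∑ j, tF α j x 0 * tF α j a' a)
      (∑ j, (sF α j 0 0 + tF α j a' 0) * tF α j a' a) (Psi x) (Psi a') (Psi 0) (bv b' a')
  · rw [if_neg (fun h => hc ((hcond x x').mp h)), if_neg hc, mul_zero]

end Core2

-- Stage 7 : unitarization of invertible affine matrices
lemma vcancel {k : ℕ} (u v w : Fin k → ZMod 2) : u + v = w ↔ u = w + v := by
  constructor
  · rintro rfl
    funext i
    show u i = u i + v i + v i
    rw [add_assoc, z2_add_self, add_zero]
  · rintro rfl
    funext i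
    show w i + v i + v i = w i
    rw [add_assoc, z2_add_self, add_zero]

section Unitz
variable {n m t : ℕ} (A : Matrix (Fin m) (Fin (2*n+1)) (ZMod 2))
  (α : Fin t → Fin (2*n+1) → ZMod 2) (lam : ℂ) (M : Matrix (W n) (W n) ℂ)

lemma unit_fibers (hM : ∀ x y, M x y = lam * chiF A x y * zeta (QF α x y)) (hU : IsUnit M) :
    lam ≠ 0 ∧ ∀ x, ∃ y₀, psiF A y₀ = A.mulVec (EE x 0) := by
  have hrow : ∀ x, ∃ y, M x y ≠ 0 := by
    intro x
    by_contra hc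
    push_neg at hc
    have hMB : M * (↑hU.unit⁻¹ : Matrix (W n) (W n) ℂ) = 1 := by
      have h5 := hU.unit.mul_inv
      rwa [IsUnit.unit_spec hU] at h5
    have h3 := congrFun (congrFun hMB x) x
    rw [Matrix.mul_apply, Matrix.one_apply_eq] at h3
    rw [Finset.sum_congr rfl (fun y _ => by rw [hc y, zero_mul]),
      Finset.sum_const_zero] at h3
    exact absurd h3.symm one_ne_zero
  constructor
  · obtain ⟨y, hy⟩ := hrow 0
    intro hl
    rw [hM, hl, zero_mul, zero_mul] at hy
    exact hy rfl
  · intro x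
    obtain ⟨y, hy⟩ := hrow x
    rw [hM] at hy
    refine ⟨y, ?_⟩
    by_contra hpsi
    rw [chi_psi, if_neg hpsi] at hy
    exact hy (by ring)

lemma fiber_sums_eq (y₀ y₁ x x' : W n)
    (h0 : psiF A y₀ = A.mulVec (EE x 0)) (h1 : psiF A y₁ = A.mulVec (EE x' 0)) :
    ∑ y, chiF A x y = ∑ y, chiF A x' y := by
  have hpt : ∀ y, chiF A x' (y + (y₀ + y₁)) = chiF A x y := by
    intro y
    rw [chi_psi, chi_psi]
    congr 1
    rw [eq_iff_iff, psiF_add, psiF_add, h0, h1, vcancel]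
    have hkey : A.mulVec (EE x' 0) + (A.mulVec (EE x 0) + A.mulVec (EE x' 0))
        = A.mulVec (EE x 0) := by
      funext i
      show A.mulVec (EE x' 0) i + (A.mulVec (EE x 0) i + A.mulVec (EE x' 0) i)
        = A.mulVec (EE x 0) i
      rw [show A.mulVec (EE x' 0) i + (A.mulVec (EE x 0) i + A.mulVec (EE x' 0) i)
        = A.mulVec (EE x 0) i + (A.mulVec (EE x' 0) i + A.mulVec (EE x' 0) i) from by ring,
        z2_add_self, add_zero]
    rw [hkey]
  calc ∑ y, chiF A x y = ∑ y, chiF A x' (y + (y₀ + y₁)) :=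
        Finset.sum_congr rfl (fun y _ => (hpt y).symm)
    _ = ∑ y, chiF A x' y :=
        Fintype.sum_equiv (Equiv.addRight (y₀ + y₁))
          (fun y => chiF A x' (y + (y₀ + y₁))) (chiF A x') (fun y => rfl)

lemma unit_orth (hM : ∀ x y, M x y = lam * chiF A x y * zeta (QF α x y)) (hU : IsUnit M)
    (x x' : W n) (hne : x ≠ x') : (M * Mᴴ) x x' = 0 := by
  classical
  obtain ⟨hlam, hfib⟩ := unit_fibers A α lam M hM hU
  rw [MMH_apply A α lam M hM x x']
  by_cases hdd : A.mulVec (EE (x + x') 0 + EE 0 0) = 0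
  · obtain ⟨y₁, hy₁⟩ := hfib x'
    by_cases hconst : ∀ k, psiF A k = 0 → CF α (x + x') 0 k = 0
    · -- rows proportional : contradiction with invertibility
      exfalso
      have hcc : ∀ z₁ z₂, psiF A z₁ = A.mulVec (EE x' 0) → psiF A z₂ = A.mulVec (EE x' 0) →
          CF α (x + x') 0 z₁ = CF α (x + x') 0 z₂ := by
        intro z₁ z₂ hp1 hp2
        apply z2_eq_of_add_zero
        rw [← CF_addy]
        apply hconst
        rw [psiF_add, hp1, hp2, vadd_self]
      set μ := zeta (TF α (x + x') 0) * m1 (BF α x' 0 (x + x') 0)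
        * m1 (CF α (x + x') 0 y₁) with hμ
      have hprop : ∀ y, M x y = μ * M x' y := by
        intro y
        rw [hM x y, hM x' y]
        have hr : A.mulVec (EE x 0) = A.mulVec (EE x' 0) := by
          have h3 := rr_add A x' (x + x')
          rw [← xw_id x x'] at h3
          have hdd' : A.mulVec (EE (x + x') 0) + A.mulVec (EE 0 0) = 0 := by
            rw [← Matrix.mulVec_add]
            exact hdd
          rw [h3, show A.mulVec (EE x' 0) + A.mulVec (EE (x + x') 0) + A.mulVec (EE 0 0)
            = A.mulVec (EE x' 0) + (A.mulVec (EE (x + x') 0) + A.mulVec (EE 0 0)) from by ring,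
            hdd', add_zero]
        have hchi : chiF A x y = chiF A x' y := by rw [chi_psi, chi_psi, hr]
        have hQ : QF α x y = QF α x' y + TF α (x + x') 0
            + 2 * (((BF α x' y (x + x') 0).val : ℕ) : ZMod 4) := by
          conv_lhs => rw [xw_id x x', show y = y + 0 from (add_zero y).symm]
          exact QF_coc α x' y (x + x') 0
        rw [hQ, zeta_add, zeta_add, zeta_two_mul, BF_split, hchi, hμ]
        by_cases hcy : psiF A y = A.mulVec (EE x' 0)
        · rw [m1_add, hcc y y₁ hcy hy₁]
          ring
        · rw [show chiF A x' y = 0 from by rw [chi_psi, if_neg hcy]]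
          ring
      set v : W n → ℂ := fun z => if z = x then 1 else if z = x' then -μ else 0 with hv
      have hvM : Matrix.vecMul v M = 0 := by
        funext y
        show (∑ z, v z * M z y) = 0
        have hptv : ∀ z, v z * M z y
            = (if z = x then M x y else 0) + (if z = x' then -μ * M x' y else 0) := by
          intro z
          rw [hv]
          simp only
          by_cases h1 : z = x
          · rw [if_pos h1, if_pos h1, if_neg (show ¬ z = x' from fun h2 => hne (h1.symm.trans h2)),
              one_mul, h1, add_zero]
          · rw [if_neg h1, if_neg h1, zero_add]
            by_cases h2 : z = x'
            · rw [if_pos h2, if_pos h2, h2]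
            · rw [if_neg h2, if_neg h2, zero_mul]
        rw [Finset.sum_congr rfl (fun z _ => hptv z), Finset.sum_add_distrib,
          Finset.sum_ite_eq' Finset.univ x (fun _ => M x y),
          Finset.sum_ite_eq' Finset.univ x' (fun _ => -μ * M x' y),
          if_pos (Finset.mem_univ _), if_pos (Finset.mem_univ _), hprop y]
        ring
      have hMB : M * (↑hU.unit⁻¹ : Matrix (W n) (W n) ℂ) = 1 := by
        have h5 := hU.unit.mul_inv
        rwa [IsUnit.unit_spec hU] at h5
      have hv0 : v = 0 := by
        calc v = Matrix.vecMul v (M * (↑hU.unit⁻¹ : Matrix (W n) (W n) ℂ)) := by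
              rw [hMB, Matrix.vecMul_one]
          _ = Matrix.vecMul (Matrix.vecMul v M) (↑hU.unit⁻¹ : Matrix (W n) (W n) ℂ) :=
              (Matrix.vecMul_vecMul v M _).symm
          _ = 0 := by rw [hvM, Matrix.zero_vecMul]
      have hvx := congrFun hv0 x
      rw [hv] at hvx
      simp only [if_pos rfl, Pi.zero_apply] at hvx
      exact one_ne_zero hvx
    · -- character sum vanishes
      push_neg at hconst
      obtain ⟨k, hk0, hkne⟩ := hconst
      have hsum : (∑ y, chiF A x' y * m1 (CF α (x + x') 0 y)) = 0 := by
        have hshape : (∑ y, chiF A x' y * m1 (CF α (x + x') 0 y))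
            = ∑ y, (if psiF A y = A.mulVec (EE x' 0) then (1:ℂ) else 0)
                * m1 (CF α (x + x') 0 y) := by
          apply Finset.sum_congr rfl
          intro y _
          rw [chi_psi]
        rw [hshape]
        apply dich_zero (psiF A) (psiF_add A) (CF α (x + x') 0) (CF_addy α (x + x') 0)
          (A.mulVec (EE x' 0)) y₁ (y₁ + k) hy₁
        · rw [psiF_add, hy₁, hk0, add_zero]
        · rw [CF_addy]
          intro hcon
          exact z2_add_ne (CF α (x + x') 0 y₁) (CF α (x + x') 0 k) hkne hcon.symm
      rw [hsum, mul_zero]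
  · rw [show ddF A (x + x') 0 = 0 from by rw [ddF, if_neg hdd]]
    ring

lemma exists_c (hM : ∀ x y, M x y = lam * chiF A x y * zeta (QF α x y)) (hU : IsUnit M) :
    ∃ c : ℂ, c ≠ 0 ∧ (c • M) * (c • M)ᴴ = 1 ∧
      (∀ x y, (c • M) x y = (c * lam) * chiF A x y * zeta (QF α x y)) := by
  classical
  obtain ⟨hlam, hfib⟩ := unit_fibers A α lam M hM hU
  set R : ℝ := Complex.normSq lam
    * (Finset.filter (fun y => A.mulVec (EE (0:W n) y) = 0) Finset.univ).card with hR
  have hcard : ∑ y, chiF A (0:W n) y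
      = ((Finset.filter (fun y => A.mulVec (EE (0:W n) y) = 0) Finset.univ).card : ℂ) := by
    rw [← Finset.sum_boole]
    apply Finset.sum_congr rfl
    intro y _
    rw [chiF]
  have hcpos : 0 < (Finset.filter (fun y => A.mulVec (EE (0:W n) y) = 0) Finset.univ).card := by
    obtain ⟨y₀, hy₀⟩ := hfib 0
    apply Finset.card_pos.mpr
    refine ⟨y₀, Finset.mem_filter.mpr ⟨Finset.mem_univ _, ?_⟩⟩
    have := chi_psi A (0:W n) y₀
    rw [if_pos hy₀] at this
    by_contra hc
    rw [chiF, if_neg hc] at this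
    exact one_ne_zero this.symm
  have hRpos : 0 < R := by
    rw [hR]
    apply mul_pos (Complex.normSq_pos.mpr hlam)
    exact_mod_cast hcpos
  refine ⟨((Real.sqrt R)⁻¹ : ℝ), ?_, ?_, ?_⟩
  · simp only [ne_eq, Complex.ofReal_eq_zero, inv_eq_zero]
    exact Real.sqrt_ne_zero'.mpr hRpos
  · have hMMH : M * Mᴴ = (R : ℂ) • 1 := by
      funext x x'
      by_cases h : x = x'
      · subst h
        rw [MMH_diag A α lam M hM x, Matrix.smul_apply, Matrix.one_apply_eq, smul_eq_mul,
          mul_one]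
        obtain ⟨y₀, hy₀⟩ := hfib x
        obtain ⟨y₁, hy₁⟩ := hfib 0
        rw [fiber_sums_eq A y₀ y₁ x 0 hy₀ hy₁, hcard, Complex.mul_conj, hR]
        push_cast
        ring
      · rw [unit_orth A α lam M hM hU x x' h, Matrix.smul_apply, Matrix.one_apply_ne h,
          smul_zero]
    rw [Matrix.conjTranspose_smul, Matrix.smul_mul, Matrix.mul_smul, hMMH, smul_smul,
      smul_smul]
    rw [show star ((((Real.sqrt R)⁻¹ : ℝ)) : ℂ) = (((Real.sqrt R)⁻¹ : ℝ) : ℂ) from by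
      rw [Complex.star_def, Complex.conj_ofReal]]
    rw [show ((((Real.sqrt R)⁻¹ : ℝ)) : ℂ) * (((Real.sqrt R)⁻¹ : ℝ) : ℂ) * (R:ℂ) = 1 from by
      rw [← Complex.ofReal_mul, ← Complex.ofReal_mul]
      norm_cast
      rw [← mul_inv, Real.mul_self_sqrt hRpos.le, inv_mul_cancel₀ hRpos.ne']]
    rw [one_smul]
  · intro x y
    rw [Matrix.smul_apply, hM, smul_eq_mul]
    ring

end Unitz

-- Stage 8 : assembly
lemma affine_entries {n m t : ℕ} (f : (Fin (2*n) → ZMod 2) → ℂ) (lam : ℂ)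
    (A : Matrix (Fin m) (Fin (2*n+1)) (ZMod 2)) (α : Fin t → Fin (2*n+1) → ZMod 2)
    (hf : ∀ x, f x = lam * (if A.mulVec (_root_.ext x) = 0 then 1 else 0) *
      Complex.I ^ ((∑ j, (∑ i, α j i * _root_.ext x i).val) % 4)) :
    ∀ x y, sigMatrix n f x y = lam * chiF A x y * zeta (QF α x y) := by
  intro x y
  show f (assemble x y) = _
  rw [hf]
  congr 1
  rw [I_pow_mod,
    show QF α x y = (((∑ j, (sF α j x y).val : ℕ)) : ZMod 4) from (Nat.cast_sum _ _).symm,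
    zeta_natCast]
  rfl

lemma conj_affine {n m t : ℕ} (A : Matrix (Fin m) (Fin (2*n+1)) (ZMod 2))
    (α : Fin t → Fin (2*n+1) → ZMod 2) (lam : ℂ) (M : Matrix (W n) (W n) ℂ)
    (hM : ∀ x y, M x y = lam * chiF A x y * zeta (QF α x y))
    (h1 : M * Mᴴ = 1) (h2 : Mᴴ * M = 1) :
    ∀ P, InPauli n P → InPauli n (M * P * Mᴴ) := by
  apply conj_mem M h1 h2
  intro u hu
  rcases Nat.eq_zero_or_pos n with hn | hn
  · subst hn
    obtain ⟨σ, hσ, hval⟩ := hu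
    have huone : (↑u : Matrix (W 0) (W 0) ℂ) = 1 := by
      rw [hval]
      funext x y
      rw [tensorP_apply, show x = y from funext fun i => i.elim0, Finset.univ_eq_empty,
        Finset.prod_empty, Matrix.one_apply_eq]
    rw [huone, mul_one, h1]
    exact InPauli_one
  · obtain ⟨e, a, b, hu_eq⟩ := gen_decomp hu
    rw [hu_eq, Matrix.mul_smul, Matrix.smul_mul]
    obtain ⟨e', a', b', hcore⟩ := core A α lam M hM h1 h2 a b
    rw [hcore]
    exact InPauli_Ipow_smul hn e (InPauli_Ipow_smul hn e' (InPauli_WeylM a' b'))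

end UA

/-- A unitary affine signature matrix conjugates the Pauli group into itself;
consequently 𝒢𝒜ₙ/U(1) ⊆ 𝒞ₙ. -/
theorem UA_stabilizes_Pauli (n : ℕ) :
    (∀ M ∈ AffMats n, M * Mᴴ = 1 → Mᴴ * M = 1 →
      ∀ P, InPauli n P → InPauli n (M * P * Mᴴ)) ∧
    (∀ M ∈ AffMats n, IsUnit M →
      ∃ c : ℂ, c ≠ 0 ∧ (c • M) * (c • M)ᴴ = 1 ∧ (c • M)ᴴ * (c • M) = 1 ∧
        ∀ P, InPauli n P → InPauli n ((c • M) * P * (c • M)ᴴ)) := by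
  constructor
  · rintro M ⟨f, ⟨lam, m, t, A, α, hf⟩, rfl⟩ h1 h2 P hP
    exact UA.conj_affine A α lam _ (UA.affine_entries f lam A α hf) h1 h2 P hP
  · rintro M ⟨f, ⟨lam, m, t, A, α, hf⟩, rfl⟩ hU
    have hM := UA.affine_entries f lam A α hf
    obtain ⟨c, hc0, hcu, hMc⟩ := UA.exists_c A α lam _ hM hU
    exact ⟨c, hc0, hcu, mul_eq_one_comm.mp hcu,
      UA.conj_affine A α (c * lam) _ hMc hcu (mul_eq_one_comm.mp hcu)⟩
end
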